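/- arXiv:1402.1155 — 4 statements merged into one kernel-verified Lean document; each statement's English description precedes it below -/
import Mathlib

section
/- Let (Ω, F, P) be a probability space and G a sub-σ-field of F. Then the space L_σ(G) of all random variables that are σ-integrable with respect to G (with a.s. equal random variables identified, ordered a.s. pointwise) is a super Dedekind complete Riesz space: every nonempty subset of L_σ(G) that is bounded from above has a supremum, and every subset having a supremum contains an at most countable subset having the same supremum. -/
open MeasureTheory Filter
open scoped ENNReal NNReal

/-- A random variable `ξ` is σ-integrable with respect to the sub-σ-field `G` if there is a
sequence of sets `s n ∈ G` increasing to `Ω` such that `ξ · 1_{s n}` is integrable for each `n`. -/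
def SigmaIntegrable {Ω : Type*} {mΩ : MeasurableSpace Ω} (μ : Measure Ω)
    (G : MeasurableSpace Ω) (ξ : Ω → ℝ) : Prop :=
  ∃ s : ℕ → Set Ω, (∀ n, MeasurableSet[G] (s n)) ∧ Monotone s ∧
    (⋃ n, s n) = Set.univ ∧ ∀ n, Integrable ((s n).indicator ξ) μ

/-- `η` is (a version of) the generalized conditional expectation `E[ξ ∣ G]`:  `η` is
`G`-measurable and `E[ξ · 1_A] = E[η · 1_A]` for every `A ∈ G` such that `ξ · 1_A` is
integrable. -/
def IsGCE {Ω : Type*} {mΩ : MeasurableSpace Ω} (μ : Measure Ω)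
    (G : MeasurableSpace Ω) (ξ η : Ω → ℝ) : Prop :=
  Measurable[G] η ∧ ∀ A : Set Ω, MeasurableSet[G] A → Integrable (A.indicator ξ) μ →
    ∫ ω, A.indicator ξ ω ∂μ = ∫ ω, A.indicator η ω ∂μ

section Aux

variable {Ω : Type*} {G : MeasurableSpace Ω} [mΩ : MeasurableSpace Ω] {μ : Measure Ω}

lemma integrable_arctan_comp [IsProbabilityMeasure μ] {f : Ω → ℝ} (hf : Measurable f) :
    Integrable (fun ω => Real.arctan (f ω)) μ := by
  refine Integrable.mono' (integrable_const (Real.pi / 2))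
    ((Real.continuous_arctan.measurable.comp hf).aestronglyMeasurable) ?_
  refine Filter.Eventually.of_forall fun ω => ?_
  rw [Real.norm_eq_abs, abs_le]
  exact ⟨(Real.neg_pi_div_two_lt_arctan _).le, (Real.arctan_lt_pi_div_two _).le⟩

lemma norm_arctan_le (x : ℝ) : ‖Real.arctan x‖ ≤ Real.pi / 2 := by
  rw [Real.norm_eq_abs, abs_le]
  exact ⟨(Real.neg_pi_div_two_lt_arctan _).le, (Real.arctan_lt_pi_div_two _).le⟩

/-- common σ-integrability sequence for two functions -/
lemma sigmaIntegrable_pair (hG : G ≤ mΩ) {ξ η : Ω → ℝ} (hξ : SigmaIntegrable μ G ξ)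
    (hη : SigmaIntegrable μ G η) :
    ∃ s : ℕ → Set Ω, (∀ n, MeasurableSet[G] (s n)) ∧ Monotone s ∧
      (⋃ n, s n) = Set.univ ∧ (∀ n, Integrable ((s n).indicator ξ) μ) ∧
      (∀ n, Integrable ((s n).indicator η) μ) := by
  obtain ⟨u, hu, humono, huun, hui⟩ := hξ
  obtain ⟨v, hv, hvmono, hvun, hvi⟩ := hη
  refine ⟨fun n => u n ∩ v n, fun n => (hu n).inter (hv n),
    fun m n hmn => Set.inter_subset_inter (humono hmn) (hvmono hmn), ?_, ?_, ?_⟩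
  · rw [Set.eq_univ_iff_forall]
    intro ω
    have h1 : ω ∈ ⋃ n, u n := by rw [huun]; trivial
    have h2 : ω ∈ ⋃ n, v n := by rw [hvun]; trivial
    obtain ⟨m, hm⟩ := Set.mem_iUnion.1 h1
    obtain ⟨k, hk⟩ := Set.mem_iUnion.1 h2
    exact Set.mem_iUnion.2 ⟨max m k, humono (le_max_left m k) hm, hvmono (le_max_right m k) hk⟩
  · intro n
    have : (u n ∩ v n).indicator ξ = (v n).indicator ((u n).indicator ξ) := by
      rw [Set.indicator_indicator, Set.inter_comm]
    rw [this]
    exact (hui n).indicator (hG _ (hv n))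
  · intro n
    have : (u n ∩ v n).indicator η = (u n).indicator ((v n).indicator η) := by
      rw [Set.indicator_indicator]
    rw [this]
    exact (hvi n).indicator (hG _ (hu n))

/-- sandwich lemma: a measurable function a.e. between two σ-integrable functions is
σ-integrable -/
lemma sigmaIntegrable_of_between (hG : G ≤ mΩ) {f φ ψ : Ω → ℝ}
    (hf : Measurable f) (hφ : SigmaIntegrable μ G φ) (hψ : SigmaIntegrable μ G ψ)
    (h1 : φ ≤ᵐ[μ] f) (h2 : f ≤ᵐ[μ] ψ) : SigmaIntegrable μ G f := by
  obtain ⟨s, hs, hsm, hsu, hsφ, hsψ⟩ := sigmaIntegrable_pair hG hφ hψ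
  refine ⟨s, hs, hsm, hsu, fun n => ?_⟩
  refine Integrable.mono' (((hsφ n).abs.add (hsψ n).abs))
    ((hf.indicator (hG _ (hs n))).aestronglyMeasurable) ?_
  filter_upwards [h1, h2] with ω hω1 hω2
  rw [Real.norm_eq_abs]
  by_cases hmem : ω ∈ s n
  · simp only [Set.indicator_of_mem hmem, Pi.add_apply, Pi.abs_apply]
    rw [abs_le]
    constructor
    · have := neg_abs_le (φ ω)
      have := abs_nonneg (ψ ω)
      linarith
    · have := le_abs_self (ψ ω)
      have := abs_nonneg (φ ω)
      linarith
  · simp only [Set.indicator_of_notMem hmem, Pi.add_apply, Pi.abs_apply, abs_zero,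
      norm_zero]
    positivity

/-- closure of a set of functions under pointwise binary maxima -/
inductive MaxClosure (S : Set (Ω → ℝ)) : (Ω → ℝ) → Prop
  | base {f : Ω → ℝ} : f ∈ S → MaxClosure S f
  | max {f g : Ω → ℝ} : MaxClosure S f → MaxClosure S g →
      MaxClosure S fun ω => max (f ω) (g ω)

lemma MaxClosure.measurable' {S : Set (Ω → ℝ)} (hS : ∀ ξ ∈ S, Measurable ξ) {f : Ω → ℝ}
    (hf : MaxClosure S f) : Measurable f := by
  induction hf with
  | base h => exact hS _ h
  | max _ _ ih1 ih2 => exact ih1.max ih2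

lemma MaxClosure.ae_le {S : Set (Ω → ℝ)} {b : Ω → ℝ} (hb : ∀ ξ ∈ S, ξ ≤ᵐ[μ] b) {f : Ω → ℝ}
    (hf : MaxClosure S f) : f ≤ᵐ[μ] b := by
  induction hf with
  | base h => exact hb _ h
  | max _ _ ih1 ih2 =>
    filter_upwards [ih1, ih2] with ω hω1 hω2
    exact max_le hω1 hω2

lemma MaxClosure.exists_countable {S : Set (Ω → ℝ)} {f : Ω → ℝ} (hf : MaxClosure S f) :
    ∃ T : Set (Ω → ℝ), T ⊆ S ∧ T.Countable ∧
      ∀ b : Ω → ℝ, (∀ ξ ∈ T, ξ ≤ᵐ[μ] b) → f ≤ᵐ[μ] b := by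
  induction hf with
  | @base f h =>
    exact ⟨{f}, Set.singleton_subset_iff.2 h, Set.countable_singleton _,
      fun b hb => hb _ rfl⟩
  | max _ _ ih1 ih2 =>
    obtain ⟨T1, hT1S, hT1c, hT1⟩ := ih1
    obtain ⟨T2, hT2S, hT2c, hT2⟩ := ih2
    refine ⟨T1 ∪ T2, Set.union_subset hT1S hT2S, hT1c.union hT2c, fun b hb => ?_⟩
    filter_upwards [hT1 b fun ξ h => hb ξ (Or.inl h), hT2 b fun ξ h => hb ξ (Or.inr h)]
      with ω hω1 hω2
    exact max_le hω1 hω2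

/-- the key construction: essential supremum of a nonempty, a.e.-bounded family -/
lemma exists_essSup [IsProbabilityMeasure μ] {S : Set (Ω → ℝ)} (hS : S.Nonempty)
    (hm : ∀ ξ ∈ S, Measurable ξ) (b : Ω → ℝ) (hb : ∀ ξ ∈ S, ξ ≤ᵐ[μ] b) :
    ∃ s : Ω → ℝ, Measurable s ∧ s ≤ᵐ[μ] b ∧ (∀ ξ ∈ S, ξ ≤ᵐ[μ] s) ∧
      ∃ C : Set (Ω → ℝ), C ⊆ S ∧ C.Countable ∧
        ∀ b' : Ω → ℝ, (∀ ξ ∈ C, ξ ≤ᵐ[μ] b') → s ≤ᵐ[μ] b' := by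
  classical
  obtain ⟨ξ₀, hξ₀⟩ := hS
  set A : Set ℝ := (fun f : Ω → ℝ => ∫ ω, Real.arctan (f ω) ∂μ) '' {f | MaxClosure S f}
    with hA
  have hAne : A.Nonempty := ⟨_, ⟨ξ₀, MaxClosure.base hξ₀, rfl⟩⟩
  have hAbdd : BddAbove A := by
    refine ⟨Real.pi / 2, ?_⟩
    rintro r ⟨f, hf, rfl⟩
    calc ∫ ω, Real.arctan (f ω) ∂μ ≤ ∫ _, Real.pi / 2 ∂μ :=
          integral_mono (integrable_arctan_comp (μ := μ) (hf.measurable' hm)) (integrable_const _)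
            fun ω => (Real.arctan_lt_pi_div_two _).le
      _ = Real.pi / 2 := by simp
  set I := sSup A with hI
  have hmemle : ∀ f, MaxClosure S f → ∫ ω, Real.arctan (f ω) ∂μ ≤ I :=
    fun f hf => le_csSup hAbdd ⟨f, hf, rfl⟩
  have hchoice : ∀ n : ℕ, ∃ f, MaxClosure S f ∧
      I - 1 / ((n : ℝ) + 1) < ∫ ω, Real.arctan (f ω) ∂μ := by
    intro n
    have h : I - 1 / ((n : ℝ) + 1) < I := by
      have : (0 : ℝ) < 1 / ((n : ℝ) + 1) := by positivity
      linarith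
    obtain ⟨r, ⟨f, hf, rfl⟩, hr⟩ := exists_lt_of_lt_csSup hAne h
    exact ⟨f, hf, hr⟩
  choose f hfmem hfint using hchoice
  -- partial maxima
  let g : ℕ → Ω → ℝ := fun n =>
    Nat.rec (f 0) (fun n gn => fun ω => max (gn ω) (f (n + 1) ω)) n
  have hgmem : ∀ n, MaxClosure S (g n) := by
    intro n
    induction n with
    | zero => exact hfmem 0
    | succ n ih => exact ih.max (hfmem (n + 1))
  have hgmono : ∀ ω, Monotone fun n => g n ω := fun ω =>
    monotone_nat_of_le_succ fun n => le_max_left _ _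
  have hfg : ∀ n ω, f n ω ≤ g n ω := by
    intro n ω
    cases n with
    | zero => exact le_refl _
    | succ n => exact le_max_right _ _
  have hgmeas : ∀ n, Measurable (g n) := fun n => (hgmem n).measurable' hm
  set s : Ω → ℝ := fun ω => ⨆ n, g n ω with hs_def
  have hsmeas : Measurable s := Measurable.iSup hgmeas
  have hEb : ∀ᵐ ω ∂μ, ∀ n, g n ω ≤ b ω :=
    eventually_countable_forall.2 fun n => (hgmem n).ae_le hb
  have hbdd : ∀ ω, (∀ n, g n ω ≤ b ω) → BddAbove (Set.range fun n => g n ω) := by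
    intro ω h
    refine ⟨b ω, ?_⟩
    rintro x ⟨n, rfl⟩
    exact h n
  have hsleb : s ≤ᵐ[μ] b := by
    filter_upwards [hEb] with ω hω
    exact ciSup_le hω
  have htend : ∀ᵐ ω ∂μ, Filter.Tendsto (fun n => g n ω) Filter.atTop (nhds (s ω)) := by
    filter_upwards [hEb] with ω hω
    exact tendsto_atTop_ciSup (hgmono ω) (hbdd ω hω)
  -- integrals of arctan ∘ g n tend to I
  have hIg : Filter.Tendsto (fun n => ∫ ω, Real.arctan (g n ω) ∂μ) Filter.atTop (nhds I) := by
    have hlow : ∀ n : ℕ, I - 1 / ((n : ℝ) + 1) ≤ ∫ ω, Real.arctan (g n ω) ∂μ := fun n =>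
      le_trans (hfint n).le (integral_mono (integrable_arctan_comp (μ := μ) ((hfmem n).measurable' hm))
        (integrable_arctan_comp (μ := μ) (hgmeas n))
        fun ω => Real.arctan_strictMono.monotone (hfg n ω))
    have hlowlim : Filter.Tendsto (fun n : ℕ => I - 1 / ((n : ℝ) + 1)) Filter.atTop
        (nhds (I - 0)) := tendsto_const_nhds.sub tendsto_one_div_add_atTop_nhds_zero_nat
    rw [sub_zero] at hlowlim
    exact tendsto_of_tendsto_of_tendsto_of_le_of_le hlowlim tendsto_const_nhds hlow
      fun n => hmemle _ (hgmem n)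
  -- integrals of arctan ∘ g n also tend to ∫ arctan ∘ s
  have h1 : Filter.Tendsto (fun n => ∫ ω, Real.arctan (g n ω) ∂μ) Filter.atTop
      (nhds (∫ ω, Real.arctan (s ω) ∂μ)) := by
    refine tendsto_integral_of_dominated_convergence (fun _ => Real.pi / 2)
      (fun n => (integrable_arctan_comp (μ := μ) (hgmeas n)).aestronglyMeasurable)
      (integrable_const _) (fun n => Filter.Eventually.of_forall fun ω => norm_arctan_le _) ?_
    filter_upwards [htend] with ω hω
    exact (Real.continuous_arctan.tendsto _).comp hω
  have hIs : ∫ ω, Real.arctan (s ω) ∂μ = I := tendsto_nhds_unique h1 hIg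
  -- s is an a.e. upper bound of S
  have hupper : ∀ ξ ∈ S, ξ ≤ᵐ[μ] s := by
    intro ξ hξ
    have hξm : Measurable ξ := hm ξ hξ
    have hmax_meas : ∀ n, Measurable fun ω => max (ξ ω) (g n ω) := fun n => hξm.max (hgmeas n)
    have h2 : Filter.Tendsto (fun n => ∫ ω, Real.arctan (max (ξ ω) (g n ω)) ∂μ) Filter.atTop
        (nhds (∫ ω, Real.arctan (max (ξ ω) (s ω)) ∂μ)) := by
      refine tendsto_integral_of_dominated_convergence (fun _ => Real.pi / 2)
        (fun n => (integrable_arctan_comp (μ := μ) (hmax_meas n)).aestronglyMeasurable)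
        (integrable_const _) (fun n => Filter.Eventually.of_forall fun ω => norm_arctan_le _) ?_
      filter_upwards [htend] with ω hω
      exact (Real.continuous_arctan.tendsto _).comp (tendsto_const_nhds.max hω)
    have hle2 : ∫ ω, Real.arctan (max (ξ ω) (s ω)) ∂μ ≤ I :=
      le_of_tendsto h2 (Filter.Eventually.of_forall fun n =>
        hmemle _ ((MaxClosure.base hξ).max (hgmem n)))
    have hsm : Measurable fun ω => max (ξ ω) (s ω) := hξm.max hsmeas
    have hnn : 0 ≤ fun ω => Real.arctan (max (ξ ω) (s ω)) - Real.arctan (s ω) := fun ω =>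
      sub_nonneg.2 (Real.arctan_strictMono.monotone (le_max_right _ _))
    have hint : Integrable (fun ω => Real.arctan (max (ξ ω) (s ω)) - Real.arctan (s ω)) μ :=
      (integrable_arctan_comp hsm).sub (integrable_arctan_comp hsmeas)
    have hsplit : ∫ ω, (Real.arctan (max (ξ ω) (s ω)) - Real.arctan (s ω)) ∂μ =
        (∫ ω, Real.arctan (max (ξ ω) (s ω)) ∂μ) - ∫ ω, Real.arctan (s ω) ∂μ :=
      integral_sub (integrable_arctan_comp hsm) (integrable_arctan_comp hsmeas)
    have hge : 0 ≤ ∫ ω, (Real.arctan (max (ξ ω) (s ω)) - Real.arctan (s ω)) ∂μ :=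
      integral_nonneg hnn
    have hzero : ∫ ω, (Real.arctan (max (ξ ω) (s ω)) - Real.arctan (s ω)) ∂μ = 0 := by
      rw [hsplit]
      rw [hsplit] at hge
      linarith [hIs ▸ hle2]
    have hae := (integral_eq_zero_iff_of_nonneg hnn hint).1 hzero
    filter_upwards [hae] with ω hω
    have : Real.arctan (max (ξ ω) (s ω)) - Real.arctan (s ω) = 0 := hω
    have hmax : max (ξ ω) (s ω) = s ω := Real.arctan_injective (by linarith [sub_eq_zero.1 this])
    exact max_eq_right_iff.1 hmax
  -- the countable subfamily
  choose T hTS hTc hTle using fun n => (hgmem n).exists_countable (μ := μ)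
  refine ⟨s, hsmeas, hsleb, hupper, ⋃ n, T n, Set.iUnion_subset hTS,
    Set.countable_iUnion hTc, ?_⟩
  intro b' hb'
  have hgb' : ∀ᵐ ω ∂μ, ∀ n, g n ω ≤ b' ω :=
    eventually_countable_forall.2 fun n =>
      hTle n b' fun ξ hξ => hb' ξ (Set.mem_iUnion.2 ⟨n, hξ⟩)
  filter_upwards [hgb'] with ω hω
  exact ciSup_le hω

end Aux

/-- `L_σ(G)`, ordered a.s. pointwise (with a.s. equal random variables identified), is a super
Dedekind complete Riesz space. -/
theorem Lsigma_superDedekindComplete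
    {Ω : Type*} [mΩ : MeasurableSpace Ω] (μ : Measure Ω) [IsProbabilityMeasure μ]
    (G : MeasurableSpace Ω) (hG : G ≤ mΩ) :
    -- `L_σ(G)` is a Riesz space: closed under addition, scalar multiplication and suprema
    (∀ ξ η : Ω → ℝ, Measurable[mΩ] ξ → SigmaIntegrable μ G ξ → Measurable[mΩ] η →
      SigmaIntegrable μ G η →
      SigmaIntegrable μ G (ξ + η) ∧ SigmaIntegrable μ G fun ω => max (ξ ω) (η ω)) ∧
    (∀ (c : ℝ) (ξ : Ω → ℝ), Measurable[mΩ] ξ → SigmaIntegrable μ G ξ →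
      SigmaIntegrable μ G (c • ξ)) ∧
    -- Dedekind completeness: every nonempty subset bounded from above has a supremum
    (∀ S : Set (Ω → ℝ), S.Nonempty →
      (∀ ξ ∈ S, Measurable[mΩ] ξ ∧ SigmaIntegrable μ G ξ) →
      (∃ b : Ω → ℝ, (Measurable[mΩ] b ∧ SigmaIntegrable μ G b) ∧ ∀ ξ ∈ S, ξ ≤ᵐ[μ] b) →
      ∃ s : Ω → ℝ, (Measurable[mΩ] s ∧ SigmaIntegrable μ G s) ∧
        (∀ ξ ∈ S, ξ ≤ᵐ[μ] s) ∧
        ∀ b : Ω → ℝ, Measurable[mΩ] b → SigmaIntegrable μ G b → (∀ ξ ∈ S, ξ ≤ᵐ[μ] b) →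
          s ≤ᵐ[μ] b) ∧
    -- countable sup property: any subset with a supremum contains a countable subset
    -- with the same supremum
    (∀ S : Set (Ω → ℝ), (∀ ξ ∈ S, Measurable[mΩ] ξ ∧ SigmaIntegrable μ G ξ) →
      ∀ s : Ω → ℝ, Measurable[mΩ] s → SigmaIntegrable μ G s →
      (∀ ξ ∈ S, ξ ≤ᵐ[μ] s) →
      (∀ b : Ω → ℝ, Measurable[mΩ] b → SigmaIntegrable μ G b → (∀ ξ ∈ S, ξ ≤ᵐ[μ] b) → s ≤ᵐ[μ] b) →
      ∃ C : Set (Ω → ℝ), C ⊆ S ∧ C.Countable ∧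
        (∀ ξ ∈ C, ξ ≤ᵐ[μ] s) ∧
        ∀ b : Ω → ℝ, Measurable[mΩ] b → SigmaIntegrable μ G b → (∀ ξ ∈ C, ξ ≤ᵐ[μ] b) →
          s ≤ᵐ[μ] b) := by
  letI _instΩ : MeasurableSpace Ω := mΩ
  refine ⟨?_, ?_, ?_, ?_⟩
  · -- closure under addition and max
    intro ξ η hξm hξσ hηm hησ
    obtain ⟨t, ht, htmono, htun, hti, hti'⟩ := sigmaIntegrable_pair hG hξσ hησ
    constructor
    · refine ⟨t, ht, htmono, htun, fun n => ?_⟩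
      have : (t n).indicator (ξ + η) = (t n).indicator ξ + (t n).indicator η := by
        funext ω
        by_cases h : ω ∈ t n <;>
          simp [Set.indicator_apply, h]
      rw [this]
      exact (hti n).add (hti' n)
    · refine ⟨t, ht, htmono, htun, fun n => ?_⟩
      refine Integrable.mono' ((hti n).abs.add ((hti' n).abs))
        (((hξm.indicator (hG _ (ht n))).max (hηm.indicator (hG _ (ht n)))).aestronglyMeasurable.congr ?_) ?_
      · refine Filter.Eventually.of_forall fun ω => ?_
        by_cases h : ω ∈ t n <;> simp [Set.indicator_apply, h]
      · refine Filter.Eventually.of_forall fun ω => ?_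
        rw [Real.norm_eq_abs]
        by_cases h : ω ∈ t n
        · simp only [Set.indicator_of_mem h, Pi.add_apply, Pi.abs_apply]
          refine le_trans (abs_max_le_max_abs_abs) ?_
          exact max_le (by simp [Set.indicator_of_mem h, abs_nonneg, le_add_of_nonneg_right])
            (by simp [Set.indicator_of_mem h, abs_nonneg, le_add_of_nonneg_left])
        · simp only [Set.indicator_of_notMem h, Pi.add_apply, Pi.abs_apply, abs_zero]
          positivity
  · -- closure under scalar multiplication
    intro c ξ hξm hξσ
    obtain ⟨t, ht, htmono, htun, hti⟩ := hξσ
    refine ⟨t, ht, htmono, htun, fun n => ?_⟩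
    have : (t n).indicator (c • ξ) = c • (t n).indicator ξ := by
      funext ω
      by_cases h : ω ∈ t n <;> simp [Set.indicator_apply, h]
    rw [this]
    exact (hti n).smul c
  · -- Dedekind completeness
    intro S hSne hS hbd
    obtain ⟨b, ⟨hbm, hbσ⟩, hbub⟩ := hbd
    obtain ⟨s, hsm, hsb, hsub, C, hCS, hCc, hCleast⟩ :=
      exists_essSup hSne (fun ξ hξ => (hS ξ hξ).1) b hbub
    obtain ⟨ξ₀, hξ₀⟩ := hSne
    have hsσ : SigmaIntegrable μ G s :=
      sigmaIntegrable_of_between hG hsm (hS ξ₀ hξ₀).2 hbσ (hsub ξ₀ hξ₀) hsb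
    refine ⟨s, ⟨hsm, hsσ⟩, hsub, fun b' _ _ hb' => ?_⟩
    exact hCleast b' fun ξ hξ => hb' ξ (hCS hξ)
  · -- countable sup property
    intro S hS s hsm hsσ hsub hleast
    rcases S.eq_empty_or_nonempty with rfl | hSne
    · exact ⟨∅, Set.empty_subset _, Set.countable_empty, fun ξ hξ => absurd hξ (Set.notMem_empty ξ),
        fun b hbm hbσ _ => hleast b hbm hbσ fun ξ hξ => absurd hξ (Set.notMem_empty ξ)⟩
    · obtain ⟨s', hs'm, hs's, hs'ub, C, hCS, hCc, hCleast⟩ :=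
        exists_essSup hSne (fun ξ hξ => (hS ξ hξ).1) s hsub
      obtain ⟨ξ₀, hξ₀⟩ := hSne
      have hs'σ : SigmaIntegrable μ G s' :=
        sigmaIntegrable_of_between hG hs'm (hS ξ₀ hξ₀).2 hsσ (hs'ub ξ₀ hξ₀) hs's
      have hss' : s ≤ᵐ[μ] s' := hleast s' hs'm hs'σ hs'ub
      refine ⟨C, hCS, hCc, fun ξ hξ => (hs'ub ξ (hCS hξ)).trans ?_, fun b hbm hbσ hb => ?_⟩
      · exact hs's
      · filter_upwards [hss', hCleast b hb] with ω h1 h2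
        exact h1.trans h2
end

section
/- Let (Ω, F, P) be a probability space and G a sub-σ-field of F. The generalized conditional expectation operator E[·|G] on L_σ(G) is order-continuous: if (ξ_n) is a sequence in L_σ(G) with ξ_n ↓ 0 a.s., then E[ξ_n|G] ↓ 0 a.s. -/
open MeasureTheory Filter
open scoped ENNReal NNReal

private lemma null_of_eps_mul {Ω : Type*} [mΩ : MeasurableSpace Ω] {μ : Measure Ω}
    [IsFiniteMeasure μ] {A : Set Ω} {ε : ℝ} (hε : 0 < ε)
    (h : (μ A).toReal * ε ≤ 0) : μ A = 0 := by
  have h1 : (μ A).toReal = 0 := by nlinarith [ENNReal.toReal_nonneg (a := μ A)]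
  rcases (ENNReal.toReal_eq_zero_iff _).1 h1 with h2 | h2
  · exact h2
  · exact absurd h2 (measure_ne_top μ A)

private lemma integrable_indicator_subset {Ω : Type*} [mΩ : MeasurableSpace Ω] {μ : Measure Ω}
    {f : Ω → ℝ} {A B : Set Ω} (hA : MeasurableSet A) (hAB : A ⊆ B)
    (h : Integrable (B.indicator f) μ) : Integrable (A.indicator f) μ := by
  have hh : A.indicator (B.indicator f) = A.indicator f := by
    rw [Set.indicator_indicator, Set.inter_eq_left.mpr hAB]
  exact hh ▸ h.indicator hA

section Ghelpers

private lemma ms_inter {Ω : Type*} {G : MeasurableSpace Ω} {A B : Set Ω}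
    (hA : MeasurableSet[G] A) (hB : MeasurableSet[G] B) : MeasurableSet[G] (A ∩ B) :=
  hA.inter hB

private lemma ms_iInter {Ω : Type*} {G : MeasurableSpace Ω} {A : ℕ → Set Ω}
    (hA : ∀ j, MeasurableSet[G] (A j)) : MeasurableSet[G] (⋂ j, A j) :=
  MeasurableSet.iInter hA

private lemma ms_le_const {Ω : Type*} {G : MeasurableSpace Ω} {f : Ω → ℝ}
    (hf : Measurable[G] f) (c : ℝ) : MeasurableSet[G] {ω | f ω ≤ c} :=
  measurableSet_le hf measurable_const

private lemma ms_const_le {Ω : Type*} {G : MeasurableSpace Ω} {f : Ω → ℝ}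
    (hf : Measurable[G] f) (c : ℝ) : MeasurableSet[G] {ω | c ≤ f ω} :=
  measurableSet_le measurable_const hf

private lemma ms_abs_le {Ω : Type*} {G : MeasurableSpace Ω} {f : Ω → ℝ}
    (hf : Measurable[G] f) (c : ℝ) : MeasurableSet[G] {ω | |f ω| ≤ c} :=
  measurableSet_le hf.abs measurable_const

private lemma ms_add_const_le {Ω : Type*} {G : MeasurableSpace Ω} {f g : Ω → ℝ}
    (hf : Measurable[G] f) (hg : Measurable[G] g) (c : ℝ) :
    MeasurableSet[G] {ω | f ω + c ≤ g ω} :=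
  measurableSet_le (hf.add measurable_const) hg

end Ghelpers

private theorem gce_aux
    {Ω : Type*} (G : MeasurableSpace Ω) [mΩ : MeasurableSpace Ω] (μ : Measure Ω)
    (hP : IsProbabilityMeasure μ) (hG : G ≤ mΩ)
    (ξ η : ℕ → Ω → ℝ)
    (hξm : ∀ n, Measurable[mΩ] (ξ n)) (hξσ : ∀ n, SigmaIntegrable μ G (ξ n))
    (hgce : ∀ n, IsGCE μ G (ξ n) (η n))
    (hdec : ∀ᵐ ω ∂μ, Antitone (fun n => ξ n ω) ∧
      Filter.Tendsto (fun n => ξ n ω) Filter.atTop (nhds 0)) :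
    ∀ᵐ ω ∂μ, Antitone (fun n => η n ω) ∧
      Filter.Tendsto (fun n => η n ω) Filter.atTop (nhds 0) := by
  haveI := hP
  classical
  choose s hsG hsMono hsUniv hsInt using hξσ
  have hηG : ∀ n, Measurable[G] (η n) := fun n => (hgce n).1
  have hηm : ∀ n, Measurable[mΩ] (η n) := fun n => (hηG n).mono hG le_rfl
  have hξnn : ∀ᵐ ω ∂μ, ∀ n, 0 ≤ ξ n ω := by
    filter_upwards [hdec] with ω hω n
    exact le_of_tendsto hω.2 (eventually_atTop.2 ⟨n, fun m hm => hω.1 hm⟩)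
  have hξdom : ∀ᵐ ω ∂μ, ∀ j, ξ j ω ≤ ξ 0 ω := hdec.mono fun ω h j => h.1 (Nat.zero_le j)
  -- Claim 2 : η n ≥ 0 a.e.
  have claim2 : ∀ n, ∀ᵐ ω ∂μ, 0 ≤ η n ω := by
    intro n
    set A : ℕ → ℕ → ℕ → Set Ω := fun k m M =>
      s n m ∩ {ω | η n ω ≤ -(1 / ((k : ℝ) + 1))} ∩ {ω | -((M : ℝ) + 1) ≤ η n ω} with hAdef
    have hAG : ∀ k m M, MeasurableSet[G] (A k m M) := fun k m M =>
      ms_inter (ms_inter (hsG n m) (ms_le_const (hηG n) _)) (ms_const_le (hηG n) _)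
    have hAnull : ∀ k m M, μ (A k m M) = 0 := by
      intro k m M
      have hAmeas : MeasurableSet[mΩ] (A k m M) := hG _ (hAG k m M)
      have hsub : A k m M ⊆ s n m := fun ω hω => hω.1.1
      have hIξ : Integrable ((A k m M).indicator (ξ n)) μ :=
        integrable_indicator_subset hAmeas hsub (hsInt n m)
      have heq := (hgce n).2 _ (hAG k m M) hIξ
      rw [integral_indicator hAmeas, integral_indicator hAmeas] at heq
      have hIη : IntegrableOn (η n) (A k m M) μ := by
        refine (integrable_const ((M : ℝ) + 1)).mono' (hηm n).aestronglyMeasurable.restrict ?_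
        filter_upwards [ae_restrict_mem hAmeas] with ω hω
        have h1 : η n ω ≤ -(1 / ((k : ℝ) + 1)) := hω.1.2
        have h2 : -((M : ℝ) + 1) ≤ η n ω := hω.2
        have h3 : (0 : ℝ) ≤ 1 / ((k : ℝ) + 1) := by positivity
        rw [Real.norm_eq_abs, abs_le]
        constructor <;> linarith
      have hconst : IntegrableOn (fun _ : Ω => 1 / ((k : ℝ) + 1)) (A k m M) μ :=
        integrableOn_const (measure_ne_top μ _)
      have hlow : 0 ≤ ∫ ω in A k m M, ξ n ω ∂μ :=
        setIntegral_nonneg_of_ae (hξnn.mono fun ω h => h n)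
      have hup : ∫ ω in A k m M, (1 / ((k : ℝ) + 1)) ∂μ ≤ ∫ ω in A k m M, -η n ω ∂μ := by
        refine setIntegral_mono_on hconst hIη.neg hAmeas fun ω hω => ?_
        have h1 : η n ω ≤ -(1 / ((k : ℝ) + 1)) := hω.1.2
        linarith
      rw [setIntegral_const, smul_eq_mul, integral_neg] at hup
      exact null_of_eps_mul (ε := 1 / ((k : ℝ) + 1)) (by positivity) (by rw [← measureReal_def]; linarith)
    have hcov : {ω | η n ω < 0} ⊆ ⋃ k, ⋃ m, ⋃ M, A k m M := by
      intro ω hω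
      have hω' : η n ω < 0 := hω
      obtain ⟨k, hk⟩ := exists_nat_one_div_lt (neg_pos.2 hω')
      obtain ⟨m, hm⟩ := Set.mem_iUnion.1 (show ω ∈ ⋃ m, s n m by rw [hsUniv n]; trivial)
      obtain ⟨M, hM⟩ := exists_nat_ge (-(η n ω))
      refine Set.mem_iUnion.2 ⟨k, Set.mem_iUnion.2 ⟨m, Set.mem_iUnion.2 ⟨M, ?_⟩⟩⟩
      exact ⟨⟨hm, by simp only [Set.mem_setOf_eq]; linarith⟩,
        by simp only [Set.mem_setOf_eq]; linarith⟩
    have hnull : μ {ω | η n ω < 0} = 0 :=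
      measure_mono_null hcov (measure_iUnion_null fun k => measure_iUnion_null fun m =>
        measure_iUnion_null fun M => hAnull k m M)
    rw [ae_iff]
    simpa [not_le] using hnull
  -- Claim 1 : η (n+1) ≤ η n a.e.
  have claim1 : ∀ n, ∀ᵐ ω ∂μ, η (n + 1) ω ≤ η n ω := by
    intro n
    set A : ℕ → ℕ → ℕ → Set Ω := fun k m M =>
      (s n m ∩ s (n + 1) m) ∩ ({ω | |η n ω| ≤ (M : ℝ)} ∩ {ω | |η (n + 1) ω| ≤ (M : ℝ)}) ∩
        {ω | η n ω + 1 / ((k : ℝ) + 1) ≤ η (n + 1) ω} with hAdef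
    have hAG : ∀ k m M, MeasurableSet[G] (A k m M) := fun k m M =>
      ms_inter (ms_inter (ms_inter (hsG n m) (hsG (n + 1) m))
        (ms_inter (ms_abs_le (hηG n) _) (ms_abs_le (hηG (n + 1)) _)))
        (ms_add_const_le (hηG n) (hηG (n + 1)) _)
    have hAnull : ∀ k m M, μ (A k m M) = 0 := by
      intro k m M
      have hAmeas : MeasurableSet[mΩ] (A k m M) := hG _ (hAG k m M)
      have hIξ1 : Integrable ((A k m M).indicator (ξ n)) μ :=
        integrable_indicator_subset hAmeas (fun ω hω => hω.1.1.1) (hsInt n m)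
      have hIξ2 : Integrable ((A k m M).indicator (ξ (n + 1))) μ :=
        integrable_indicator_subset hAmeas (fun ω hω => hω.1.1.2) (hsInt (n + 1) m)
      have heq1 := (hgce n).2 _ (hAG k m M) hIξ1
      have heq2 := (hgce (n + 1)).2 _ (hAG k m M) hIξ2
      rw [integral_indicator hAmeas, integral_indicator hAmeas] at heq1 heq2
      have hIη1 : IntegrableOn (η n) (A k m M) μ := by
        refine (integrable_const (M : ℝ)).mono' (hηm n).aestronglyMeasurable.restrict ?_
        filter_upwards [ae_restrict_mem hAmeas] with ω hω
        simpa [Real.norm_eq_abs] using hω.1.2.1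
      have hIη2 : IntegrableOn (η (n + 1)) (A k m M) μ := by
        refine (integrable_const (M : ℝ)).mono' (hηm (n + 1)).aestronglyMeasurable.restrict ?_
        filter_upwards [ae_restrict_mem hAmeas] with ω hω
        simpa [Real.norm_eq_abs] using hω.1.2.2
      have hmono : ∫ ω in A k m M, ξ (n + 1) ω ∂μ ≤ ∫ ω in A k m M, ξ n ω ∂μ := by
        refine integral_mono_ae ((integrable_indicator_iff hAmeas).1 hIξ2)
          ((integrable_indicator_iff hAmeas).1 hIξ1) ?_
        exact ae_restrict_of_ae (hdec.mono fun ω h => h.1 (Nat.le_succ n))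
      have hconst : IntegrableOn (fun _ : Ω => 1 / ((k : ℝ) + 1)) (A k m M) μ :=
        integrableOn_const (measure_ne_top μ _)
      have hstep : ∫ ω in A k m M, (1 / ((k : ℝ) + 1)) ∂μ ≤
          ∫ ω in A k m M, (η (n + 1) ω - η n ω) ∂μ := by
        refine setIntegral_mono_on hconst (hIη2.sub hIη1) hAmeas fun ω hω => ?_
        have h1 : η n ω + 1 / ((k : ℝ) + 1) ≤ η (n + 1) ω := hω.2
        linarith
      rw [setIntegral_const, smul_eq_mul, integral_sub hIη2 hIη1] at hstep
      exact null_of_eps_mul (ε := 1 / ((k : ℝ) + 1)) (by positivity) (by rw [← measureReal_def]; linarith)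
    have hcov : {ω | η n ω < η (n + 1) ω} ⊆ ⋃ k, ⋃ m, ⋃ M, A k m M := by
      intro ω hω
      have hω' : η n ω < η (n + 1) ω := hω
      obtain ⟨k, hk⟩ := exists_nat_one_div_lt (sub_pos.2 hω')
      obtain ⟨m₁, hm₁⟩ := Set.mem_iUnion.1 (show ω ∈ ⋃ m, s n m by rw [hsUniv n]; trivial)
      obtain ⟨m₂, hm₂⟩ :=
        Set.mem_iUnion.1 (show ω ∈ ⋃ m, s (n + 1) m by rw [hsUniv (n + 1)]; trivial)
      obtain ⟨M, hM⟩ := exists_nat_ge (max |η n ω| |η (n + 1) ω|)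
      refine Set.mem_iUnion.2 ⟨k, Set.mem_iUnion.2 ⟨max m₁ m₂, Set.mem_iUnion.2 ⟨M, ?_⟩⟩⟩
      refine ⟨⟨⟨hsMono n (le_max_left _ _) hm₁, hsMono (n + 1) (le_max_right _ _) hm₂⟩,
        ⟨(le_max_left _ _).trans hM, (le_max_right _ _).trans hM⟩⟩, ?_⟩
      simp only [Set.mem_setOf_eq]
      linarith
    have hnull : μ {ω | η n ω < η (n + 1) ω} = 0 :=
      measure_mono_null hcov (measure_iUnion_null fun k => measure_iUnion_null fun m =>
        measure_iUnion_null fun M => hAnull k m M)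
    rw [ae_iff]
    simpa [not_le] using hnull
  have hηanti : ∀ᵐ ω ∂μ, ∀ j, η (j + 1) ω ≤ η j ω := ae_all_iff.2 claim1
  have hηnn : ∀ᵐ ω ∂μ, ∀ j, 0 ≤ η j ω := ae_all_iff.2 claim2
  -- Claim 3
  have claim3 : ∀ k m M : ℕ,
      μ ((⋂ j, {ω | 1 / ((k : ℝ) + 1) ≤ η j ω}) ∩ s 0 m ∩ {ω | |η 0 ω| ≤ (M : ℝ)}) = 0 := by
    intro k m M
    set B := (⋂ j, {ω | 1 / ((k : ℝ) + 1) ≤ η j ω}) ∩ s 0 m ∩ {ω | |η 0 ω| ≤ (M : ℝ)} with hBdef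
    have hBG : MeasurableSet[G] B :=
      ms_inter (ms_inter (ms_iInter fun j => ms_const_le (hηG j) _) (hsG 0 m))
        (ms_abs_le (hηG 0) _)
    have hBmeas : MeasurableSet[mΩ] B := hG _ hBG
    have hBsub : B ⊆ s 0 m := fun ω hω => hω.1.2
    have hIξ : ∀ j, Integrable (B.indicator (ξ j)) μ := by
      intro j
      refine (hsInt 0 m).abs.mono' ((hξm j).indicator hBmeas).aestronglyMeasurable ?_
      filter_upwards [hξnn, hξdom] with ω h1 h2
      by_cases hωB : ω ∈ B
      · rw [Set.indicator_of_mem hωB, Real.norm_eq_abs, abs_of_nonneg (h1 j)]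
        calc ξ j ω ≤ ξ 0 ω := h2 j
          _ ≤ |ξ 0 ω| := le_abs_self _
          _ = |(s 0 m).indicator (ξ 0) ω| := by rw [Set.indicator_of_mem (hBsub hωB)]
      · simp only [Set.indicator_of_notMem hωB, norm_zero]
        exact abs_nonneg _
    have heq : ∀ j, ∫ ω in B, ξ j ω ∂μ = ∫ ω in B, η j ω ∂μ := by
      intro j
      have h := (hgce j).2 _ hBG (hIξ j)
      rwa [integral_indicator hBmeas, integral_indicator hBmeas] at h
    have hIη : ∀ j, IntegrableOn (η j) B μ := by
      intro j
      refine (integrable_const (M : ℝ)).mono' (hηm j).aestronglyMeasurable.restrict ?_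
      filter_upwards [ae_restrict_mem hBmeas, ae_restrict_of_ae hηnn, ae_restrict_of_ae hηanti]
        with ω hωB hnn hanti
      have hA : Antitone fun j => η j ω := antitone_nat_of_succ_le hanti
      rw [Real.norm_eq_abs, abs_of_nonneg (hnn j)]
      calc η j ω ≤ η 0 ω := hA (Nat.zero_le j)
        _ ≤ |η 0 ω| := le_abs_self _
        _ ≤ (M : ℝ) := hωB.2
    have hlow : ∀ j, (μ B).toReal * (1 / ((k : ℝ) + 1)) ≤ ∫ ω in B, ξ j ω ∂μ := by
      intro j
      rw [heq j]
      have h1 : ∫ ω in B, (1 / ((k : ℝ) + 1)) ∂μ ≤ ∫ ω in B, η j ω ∂μ := by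
        refine setIntegral_mono_on (integrableOn_const (measure_ne_top μ _))
          (hIη j) hBmeas fun ω hω => ?_
        exact Set.mem_iInter.1 hω.1.1 j
      rwa [setIntegral_const, smul_eq_mul] at h1
    have htend : Tendsto (fun j => ∫ ω in B, ξ j ω ∂μ) atTop (nhds 0) := by
      have h := tendsto_integral_of_dominated_convergence (μ := μ.restrict B)
        (F := fun j ω => ξ j ω) (f := fun _ => (0 : ℝ)) (fun ω => |ξ 0 ω|)
        (fun j => (hξm j).aestronglyMeasurable.restrict)
        ((integrable_indicator_iff hBmeas).1 (hIξ 0)).abs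
        (fun j => ae_restrict_of_ae (by
          filter_upwards [hξnn, hξdom] with ω h1 h2
          rw [Real.norm_eq_abs, abs_of_nonneg (h1 j)]
          exact (h2 j).trans (le_abs_self _)))
        (ae_restrict_of_ae (hdec.mono fun ω h => h.2))
      simpa using h
    exact null_of_eps_mul (ε := 1 / ((k : ℝ) + 1)) (by positivity) (ge_of_tendsto htend (Eventually.of_forall hlow))
  have hN : ∀ᵐ ω ∂μ, ∀ k : ℕ, ∃ j, η j ω < 1 / ((k : ℝ) + 1) := by
    rw [ae_iff]
    have hcov : {ω | ¬ ∀ k : ℕ, ∃ j, η j ω < 1 / ((k : ℝ) + 1)} ⊆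
        ⋃ k : ℕ, ⋃ m : ℕ, ⋃ M : ℕ, ((⋂ j, {ω | 1 / ((k : ℝ) + 1) ≤ η j ω}) ∩ s 0 m ∩
          {ω | |η 0 ω| ≤ (M : ℝ)}) := by
      intro ω hω
      have hω' : ¬ ∀ k : ℕ, ∃ j, η j ω < 1 / ((k : ℝ) + 1) := hω
      push_neg at hω'
      obtain ⟨k, hk⟩ := hω'
      obtain ⟨m, hm⟩ := Set.mem_iUnion.1 (show ω ∈ ⋃ m, s 0 m by rw [hsUniv 0]; trivial)
      obtain ⟨M, hM⟩ := exists_nat_ge |η 0 ω|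
      exact Set.mem_iUnion.2 ⟨k, Set.mem_iUnion.2 ⟨m, Set.mem_iUnion.2 ⟨M,
        ⟨⟨Set.mem_iInter.2 fun j => hk j, hm⟩, hM⟩⟩⟩⟩
    exact measure_mono_null hcov (measure_iUnion_null fun k => measure_iUnion_null fun m =>
      measure_iUnion_null fun M => claim3 k m M)
  filter_upwards [hηanti, hηnn, hN] with ω h1 h2 h3
  have hA : Antitone fun j => η j ω := antitone_nat_of_succ_le h1
  refine ⟨hA, ?_⟩
  rw [Metric.tendsto_atTop]
  intro ε hε
  obtain ⟨k, hk⟩ := exists_nat_one_div_lt hε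
  obtain ⟨j, hj⟩ := h3 k
  refine ⟨j, fun p hp => ?_⟩
  rw [Real.dist_eq, sub_zero, abs_of_nonneg (h2 p)]
  exact lt_trans (lt_of_le_of_lt (hA hp) hj) hk

/-- The generalized conditional expectation operator is order-continuous: if `ξ n ↓ 0` a.s.
in `L_σ(G)`, then `E[ξ n ∣ G] ↓ 0` a.s. -/
theorem generalized_condExp_order_continuous
    {Ω : Type*} [mΩ : MeasurableSpace Ω] (μ : Measure Ω) [IsProbabilityMeasure μ]
    (G : MeasurableSpace Ω) (hG : G ≤ mΩ)
    (ξ η : ℕ → Ω → ℝ)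
    (hξm : ∀ n, Measurable[mΩ] (ξ n)) (hξσ : ∀ n, SigmaIntegrable μ G (ξ n))
    (hgce : ∀ n, IsGCE μ G (ξ n) (η n))
    (hdec : ∀ᵐ ω ∂μ, Antitone (fun n => ξ n ω) ∧
      Filter.Tendsto (fun n => ξ n ω) Filter.atTop (nhds 0)) :
    ∀ᵐ ω ∂μ, Antitone (fun n => η n ω) ∧
      Filter.Tendsto (fun n => η n ω) Filter.atTop (nhds 0) :=
  @gce_aux Ω G mΩ μ ‹_› hG ξ η hξm hξσ hgce hdec
end

section
/- Let (Ω, F, P) be a probability space and G a sub-σ-field of F. The generalized conditional expectation operator E[·|G] is an averaging operator on L_σ(G): for any pair ξ, η ∈ L_σ(G) such that η·E[ξ|G] ∈ L_σ(G), one has E[η·E[ξ|G] | G] = E[η|G]·E[ξ|G] a.s. -/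
open MeasureTheory Filter
open scoped ENNReal NNReal

/-- The generalized conditional expectation operator is an averaging operator:
`E[η · E[ξ∣G] ∣ G] = E[η∣G] · E[ξ∣G]` a.s. whenever `ξ, η, η · E[ξ∣G] ∈ L_σ(G)`. -/
theorem generalized_condExp_averaging
    {Ω : Type*} [mΩ : MeasurableSpace Ω] (μ : Measure Ω) [IsProbabilityMeasure μ]
    (G : MeasurableSpace Ω) (hG : G ≤ mΩ)
    (ξ η ζ θ κ : Ω → ℝ)
    (hξm : Measurable[mΩ] ξ) (hξσ : SigmaIntegrable μ G ξ)
    (hηm : Measurable[mΩ] η) (hησ : SigmaIntegrable μ G η)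
    (hζ : IsGCE μ G ξ ζ) (hθ : IsGCE μ G η θ)
    (hprod : SigmaIntegrable μ G fun ω => η ω * ζ ω)
    (hκ : IsGCE μ G (fun ω => η ω * ζ ω) κ) :
    κ =ᵐ[μ] fun ω => θ ω * ζ ω := by
  obtain ⟨s, hsG, hsmono, hsuniv, hsint⟩ := hησ
  obtain ⟨t, htG, htmono, htuniv, htint⟩ := hprod
  obtain ⟨hζm, hζeq⟩ := hζ
  obtain ⟨hθm, hθeq⟩ := hθ
  obtain ⟨hκm, hκeq⟩ := hκ
  set p : Ω → ℝ := fun ω => η ω * ζ ω with hp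
  -- the localizing sets
  set B : ℕ → Set Ω := fun n =>
    s n ∩ t n ∩ {ω | |ζ ω| ≤ (n : ℝ)} ∩ {ω | |θ ω| ≤ (n : ℝ)} ∩ {ω | |κ ω| ≤ (n : ℝ)}
    with hB
  have hBG : ∀ n, MeasurableSet[G] (B n) := by
    intro n
    refine ((((hsG n).inter (htG n)).inter ?_).inter ?_).inter ?_
    · exact measurableSet_le hζm.abs measurable_const
    · exact measurableSet_le hθm.abs measurable_const
    · exact measurableSet_le hκm.abs measurable_const
  letI : MeasurableSpace Ω := mΩ
  have hBs : ∀ n, B n ⊆ s n := fun n =>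
    (Set.inter_subset_left.trans (Set.inter_subset_left.trans
      (Set.inter_subset_left.trans Set.inter_subset_left)))
  have hBt : ∀ n, B n ⊆ t n := fun n =>
    (Set.inter_subset_left.trans (Set.inter_subset_left.trans
      (Set.inter_subset_left.trans Set.inter_subset_right)))
  have hBcover : ∀ ω : Ω, ∃ n, ω ∈ B n := by
    intro ω
    have h1 : ω ∈ ⋃ n, s n := hsuniv ▸ Set.mem_univ ω
    have h2 : ω ∈ ⋃ n, t n := htuniv ▸ Set.mem_univ ω
    obtain ⟨n1, hn1⟩ := Set.mem_iUnion.1 h1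
    obtain ⟨n2, hn2⟩ := Set.mem_iUnion.1 h2
    obtain ⟨n3, hn3⟩ := exists_nat_ge (max (|ζ ω|) (max (|θ ω|) (|κ ω|)))
    refine ⟨max n1 (max n2 n3), ?_⟩
    have hc : (n3 : ℝ) ≤ (max n1 (max n2 n3) : ℕ) := by
      exact_mod_cast Nat.le_max_right n1 _ |>.trans' (Nat.le_max_right n2 n3)
    refine ⟨⟨⟨⟨hsmono (Nat.le_max_left n1 _) hn1,
      htmono ((Nat.le_max_left n2 n3).trans (Nat.le_max_right n1 _)) hn2⟩, ?_⟩, ?_⟩, ?_⟩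
    · exact le_trans (le_trans (le_max_left _ _) hn3) hc
    · exact le_trans (le_trans ((le_max_left _ _).trans (le_max_right _ _)) hn3) hc
    · exact le_trans (le_trans ((le_max_right _ _).trans (le_max_right _ _)) hn3) hc
  -- integrability facts
  have hbound : ∀ (f : Ω → ℝ) (n : ℕ), Measurable[G] f → (∀ ω ∈ B n, |f ω| ≤ (n : ℝ)) →
      Integrable ((B n).indicator f) μ := by
    intro f n hf hfb
    refine Integrable.mono' (integrable_const (n : ℝ)) ?_ ?_
    · have : Measurable[mΩ] ((B n).indicator f) := (hf.indicator (hBG n)).mono hG le_rfl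
      exact this.aestronglyMeasurable
    · refine Filter.Eventually.of_forall fun ω => ?_
      by_cases hω : ω ∈ B n
      · simpa [Set.indicator_of_mem hω] using hfb ω hω
      · simp [Set.indicator_of_notMem hω]
  have hind : ∀ (f : Ω → ℝ) (u : ℕ → Set Ω) (n : ℕ), B n ⊆ u n →
      Integrable ((u n).indicator f) μ → Integrable ((B n).indicator f) μ := by
    intro f u n hsub hint
    have : (B n).indicator ((u n).indicator f) = (B n).indicator f := by
      rw [Set.indicator_indicator, Set.inter_eq_left.2 hsub]
    rw [← this]
    exact hint.indicator (hG _ (hBG n))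
  have hη_int : ∀ n, Integrable ((B n).indicator η) μ :=
    fun n => hind η s n (hBs n) (hsint n)
  have hp_int : ∀ n, Integrable ((B n).indicator p) μ :=
    fun n => hind p t n (hBt n) (htint n)
  have hκ_int : ∀ n, Integrable ((B n).indicator κ) μ :=
    fun n => hbound κ n hκm fun ω hω => hω.2
  have hθ_int : ∀ n, Integrable ((B n).indicator θ) μ :=
    fun n => hbound θ n hθm fun ω hω => hω.1.2
  -- generic localization lemma for GCE
  have key : ∀ (f g : Ω → ℝ), Measurable[G] g →
      (∀ A : Set Ω, MeasurableSet[G] A → Integrable (A.indicator f) μ →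
        ∫ ω, A.indicator f ω ∂μ = ∫ ω, A.indicator g ω ∂μ) →
      ∀ n, Integrable ((B n).indicator f) μ → Integrable ((B n).indicator g) μ →
      (B n).indicator g =ᵐ[μ] μ[(B n).indicator f | G] := by
    intro f g hgm hgeq n hfint hgint
    have hsm : StronglyMeasurable[G] ((B n).indicator g) :=
      (hgm.indicator (hBG n)).stronglyMeasurable
    have hsm' : AEStronglyMeasurable[G] ((B n).indicator g) μ :=
      hsm.aestronglyMeasurable
    refine ae_eq_condExp_of_forall_setIntegral_eq hG hfint
      (fun A _ _ => hgint.integrableOn) (fun A hA _ => ?_) hsm'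
    have hAm : MeasurableSet[mΩ] A := hG _ hA
    have e1 : ∀ h : Ω → ℝ, ∫ x in A, (B n).indicator h x ∂μ
        = ∫ x, (A ∩ B n).indicator h x ∂μ := by
      intro h
      rw [← integral_indicator (μ := μ) hAm, Set.indicator_indicator]
    rw [e1, e1]
    have hABint : Integrable ((A ∩ B n).indicator f) μ := by
      rw [← Set.indicator_indicator]
      exact Integrable.indicator (μ := μ) hfint hAm
    exact (hgeq (A ∩ B n) (hA.inter (hBG n)) hABint).symm
  haveI : SigmaFinite (μ.trim hG) := inferInstance
  have claimA : ∀ n, (B n).indicator κ =ᵐ[μ] μ[(B n).indicator p | G] :=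
    fun n => key p κ hκm hκeq n (hp_int n) (hκ_int n)
  have claimB : ∀ n, (B n).indicator θ =ᵐ[μ] μ[(B n).indicator η | G] :=
    fun n => key η θ hθm hθeq n (hη_int n) (hθ_int n)
  have hmulfun : ∀ n, ((B n).indicator ζ) * ((B n).indicator η) = (B n).indicator p := by
    intro n
    funext ω
    by_cases hω : ω ∈ B n
    · simp [Set.indicator_of_mem hω, hp, mul_comm]
    · simp [Set.indicator_of_notMem hω]
  have claimC : ∀ n, μ[(B n).indicator p | G]
      =ᵐ[μ] ((B n).indicator ζ) * μ[(B n).indicator η | G] := by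
    intro n
    have := condExp_mul_of_stronglyMeasurable_left (μ := μ) (m := G)
      (hζm.indicator (hBG n)).stronglyMeasurable
      (by rw [hmulfun n]; exact hp_int n) (hη_int n)
    rwa [hmulfun n] at this
  have final : ∀ n, (B n).indicator κ =ᵐ[μ] fun ω => (B n).indicator θ ω * (B n).indicator ζ ω := by
    intro n
    refine ((claimA n).trans ((claimC n).trans ?_))
    filter_upwards [claimB n] with ω hω
    simp only [Pi.mul_apply]
    rw [← hω, mul_comm]
  have hall : ∀ᵐ ω ∂μ, ∀ n, (B n).indicator κ ω = (B n).indicator θ ω * (B n).indicator ζ ω :=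
    ae_all_iff.2 final
  filter_upwards [hall] with ω hω
  obtain ⟨n, hn⟩ := hBcover ω
  have := hω n
  rwa [Set.indicator_of_mem hn, Set.indicator_of_mem hn, Set.indicator_of_mem hn] at this
end

section
/- (Douglas' theorem) Let (Ω, F, P) be a probability space and T : L_1(Ω, F, P) → L_1(Ω, F, P) a linear operator. Then the following are equivalent: (i) T is a contractive Markov projection, i.e., T∘T = T, T is positive, T(1) = 1, and ‖T(ξ)‖_1 ≤ ‖ξ‖_1 for all ξ ∈ L_1; (ii) there exists a sub-σ-field G of F such that T is the ordinary conditional expectation operator E[·|G]. -/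
open MeasureTheory Filter
open scoped Topology
open scoped ENNReal NNReal

set_option linter.unusedSectionVars false

namespace Douglas

variable {Ω : Type*} [mΩ : MeasurableSpace Ω] {μ : Measure Ω} [IsProbabilityMeasure μ]

noncomputable def one (μ : Measure Ω) [IsProbabilityMeasure μ] : Lp ℝ 1 μ :=
  (memLp_const (1:ℝ)).toLp fun _ => (1:ℝ)

lemma coe_one : ⇑(one μ) =ᵐ[μ] fun _ => (1:ℝ) := MemLp.coeFn_toLp _

lemma one_nonneg : 0 ≤ one (μ := μ) := by
  rw [← Lp.coeFn_nonneg]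
  filter_upwards [coe_one (μ := μ), Lp.coeFn_zero ℝ 1 μ] with ω h1 h0
  rw [h1]; norm_num

lemma integrable_coe (u : Lp ℝ 1 μ) : Integrable (⇑u) μ := L1.integrable_coeFn u

lemma int_add (u v : Lp ℝ 1 μ) : ∫ ω, (u + v) ω ∂μ = ∫ ω, u ω ∂μ + ∫ ω, v ω ∂μ := by
  rw [integral_congr_ae (Lp.coeFn_add u v)]
  exact integral_add (integrable_coe u) (integrable_coe v)

lemma int_smul (c : ℝ) (u : Lp ℝ 1 μ) : ∫ ω, (c • u) ω ∂μ = c * ∫ ω, u ω ∂μ := by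
  rw [integral_congr_ae (Lp.coeFn_smul c u)]
  simp only [Pi.smul_apply]
  rw [integral_smul, smul_eq_mul]

lemma int_one : ∫ ω, (one μ) ω ∂μ = 1 := by
  rw [integral_congr_ae (coe_one (μ := μ))]; simp

lemma int_mono {u v : Lp ℝ 1 μ} (h : u ≤ v) : ∫ ω, u ω ∂μ ≤ ∫ ω, v ω ∂μ := by
  rw [← Lp.coeFn_le] at h
  exact integral_mono_ae (integrable_coe u) (integrable_coe v) h

lemma norm_of_nonneg {u : Lp ℝ 1 μ} (h : 0 ≤ u) : ‖u‖ = ∫ ω, u ω ∂μ := by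
  rw [← Lp.coeFn_nonneg] at h
  rw [L1.norm_eq_integral_norm]
  refine integral_congr_ae ?_
  filter_upwards [h] with ω hω
  simpa [Real.norm_eq_abs] using abs_of_nonneg hω

lemma abs_setIntegral_le (u : Lp ℝ 1 μ) (A : Set Ω) : |∫ ω in A, u ω ∂μ| ≤ ‖u‖ := by
  rw [L1.norm_eq_integral_norm]
  calc |∫ ω in A, u ω ∂μ| = ‖∫ ω in A, u ω ∂μ‖ := (Real.norm_eq_abs _).symm
    _ ≤ ∫ ω in A, ‖u ω‖ ∂μ := norm_integral_le_integral_norm _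
    _ ≤ ∫ ω, ‖u ω‖ ∂μ := setIntegral_le_integral (integrable_coe u).norm
        (Eventually.of_forall fun ω => norm_nonneg _)

lemma eq_of_le_of_int {u v : Lp ℝ 1 μ} (h : u ≤ v) (hi : ∫ ω, v ω ∂μ ≤ ∫ ω, u ω ∂μ) : u = v := by
  have h0 : 0 ≤ v - u := by simpa using sub_nonneg.mpr h
  have hn : ‖v - u‖ = 0 := by
    rw [norm_of_nonneg h0, integral_congr_ae (Lp.coeFn_sub v u)]
    have := integral_sub (integrable_coe v) (integrable_coe u)
    simp only [Pi.sub_apply] at this ⊢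
    rw [this]
    have h2 := int_mono h
    linarith
  exact (sub_eq_zero.mp (norm_eq_zero.mp hn)).symm

section Ind
variable {A B : Set Ω}

noncomputable def chi (μ : Measure Ω) [IsProbabilityMeasure μ] (A : Set Ω)
    (hA : MeasurableSet A) : Lp ℝ 1 μ :=
  ((memLp_const (1:ℝ)).indicator hA).toLp (A.indicator fun _ => (1:ℝ))

lemma coe_chi (hA : MeasurableSet A) :
    ⇑(chi μ A hA) =ᵐ[μ] A.indicator fun _ => (1:ℝ) := MemLp.coeFn_toLp _

noncomputable def restr (A : Set Ω) (hA : MeasurableSet A) (h : Lp ℝ 1 μ) : Lp ℝ 1 μ :=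
  ((Lp.memLp h).indicator hA).toLp (A.indicator ⇑h)

lemma coe_restr (hA : MeasurableSet A) (h : Lp ℝ 1 μ) :
    ⇑(restr A hA h) =ᵐ[μ] A.indicator ⇑h := MemLp.coeFn_toLp _

lemma restr_add_compl (hA : MeasurableSet A) (h : Lp ℝ 1 μ) :
    restr A hA h + restr Aᶜ hA.compl h = h := by
  refine Lp.ext ?_
  filter_upwards [Lp.coeFn_add (restr A hA h) (restr Aᶜ hA.compl h), coe_restr hA h,
    coe_restr hA.compl h] with ω h1 h2 h3
  rw [h1]; simp only [Pi.add_apply, h2, h3]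
  by_cases hω : ω ∈ A <;>
    simp [Set.indicator_of_mem, Set.indicator_of_notMem, hω]

lemma restr_nonneg (hA : MeasurableSet A) {h : Lp ℝ 1 μ} (hh : 0 ≤ h) :
    0 ≤ restr A hA h := by
  rw [← Lp.coeFn_nonneg] at hh ⊢
  filter_upwards [coe_restr hA h, hh] with ω h1 h2
  simp only [Pi.zero_apply] at h2
  rw [h1]
  by_cases hω : ω ∈ A <;>
    simp [Set.indicator_of_mem, Set.indicator_of_notMem, hω, h2]

lemma restr_le_smul_chi (hA : MeasurableSet A) {h : Lp ℝ 1 μ} {c : ℝ}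
    (hh : h ≤ c • one μ) (hh0 : 0 ≤ h) : restr A hA h ≤ c • chi μ A hA := by
  rw [← Lp.coeFn_le] at hh ⊢
  rw [← Lp.coeFn_nonneg] at hh0
  filter_upwards [coe_restr hA h, hh, hh0, Lp.coeFn_smul c (one μ), coe_one (μ := μ),
    Lp.coeFn_smul c (chi μ A hA), coe_chi (μ := μ) hA] with ω h1 h2 h3 h4 h5 h6 h7
  rw [h1, h6]
  simp only [Pi.smul_apply, h7, h4, h5, smul_eq_mul] at *
  by_cases hω : ω ∈ A <;>
    simp_all [Set.indicator_of_mem, Set.indicator_of_notMem, hω]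

lemma int_restr (hA : MeasurableSet A) (h : Lp ℝ 1 μ) :
    ∫ ω, (restr A hA h) ω ∂μ = ∫ ω in A, h ω ∂μ := by
  rw [integral_congr_ae (coe_restr hA h), integral_indicator hA]

lemma chi_empty : chi μ ∅ MeasurableSet.empty = 0 := by
  refine Lp.ext ?_
  filter_upwards [coe_chi (μ := μ) MeasurableSet.empty, Lp.coeFn_zero ℝ 1 μ] with ω h1 h2
  simp [h1, h2]

lemma chi_compl (hA : MeasurableSet A) : chi μ Aᶜ hA.compl = one μ - chi μ A hA := by
  refine Lp.ext ?_
  filter_upwards [coe_chi (μ := μ) hA.compl, Lp.coeFn_sub (one μ) (chi μ A hA),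
    coe_one (μ := μ), coe_chi (μ := μ) hA] with ω h1 h2 h3 h4
  rw [h1, h2]; simp only [Pi.sub_apply, h3, h4]
  by_cases hω : ω ∈ A <;>
    simp [Set.indicator_of_mem, Set.indicator_of_notMem, hω]

lemma chi_union (hA : MeasurableSet A) (hB : MeasurableSet B) :
    chi μ (A ∪ B) (hA.union hB) = chi μ A hA ⊔ chi μ B hB := by
  refine Lp.ext ?_
  filter_upwards [coe_chi (μ := μ) (hA.union hB), Lp.coeFn_sup (chi μ A hA) (chi μ B hB),
    coe_chi (μ := μ) hA, coe_chi (μ := μ) hB] with ω h1 h2 h3 h4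
  rw [h1, h2]; simp only [Pi.sup_apply, h3, h4]
  by_cases hω : ω ∈ A <;> by_cases hω' : ω ∈ B <;>
    simp [Set.indicator_of_mem, Set.indicator_of_notMem, hω, hω']

end Ind

lemma real_trunc_abs_le (x c : ℝ) (hc : 0 ≤ c) : |x - max (min x c) (-c)| ≤ |x| := by
  rcases le_total x (-c) with h | h
  · rw [min_eq_left (by linarith : x ≤ c), max_eq_right h]
    rw [abs_of_nonpos (by linarith), abs_of_nonpos (by linarith)]; linarith
  · rcases le_total x c with h2 | h2
    · rw [min_eq_left h2, max_eq_left h]; simp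
    · rw [min_eq_right h2, max_eq_left (by linarith)]
      rw [abs_of_nonneg (by linarith), abs_of_nonneg (by linarith)]; linarith

lemma abs_int_le (u : Lp ℝ 1 μ) : |∫ ω, u ω ∂μ| ≤ ‖u‖ := by
  have := abs_setIntegral_le u Set.univ
  rwa [Measure.restrict_univ] at this

lemma int_sub (u v : Lp ℝ 1 μ) : ∫ ω, (u - v) ω ∂μ = ∫ ω, u ω ∂μ - ∫ ω, v ω ∂μ := by
  rw [integral_congr_ae (Lp.coeFn_sub u v)]
  simpa using integral_sub (integrable_coe u) (integrable_coe v)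

section T
variable {T : Lp ℝ 1 μ →ₗ[ℝ] Lp ℝ 1 μ}

lemma T_mono (hpos : ∀ f, 0 ≤ f → 0 ≤ T f) {u v : Lp ℝ 1 μ} (h : u ≤ v) : T u ≤ T v := by
  have := hpos (v - u) (by simpa using sub_nonneg.mpr h)
  rw [map_sub] at this
  exact sub_nonneg.mp this

lemma int_T_of_bounded (hpos : ∀ f, 0 ≤ f → 0 ≤ T f) (hone : T (one μ) = one μ)
    (hnorm : ∀ f, ‖T f‖ ≤ ‖f‖) {h : Lp ℝ 1 μ} {c : ℝ} (h0 : 0 ≤ h) (hc : h ≤ c • one μ) :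
    ∫ ω, (T h) ω ∂μ = ∫ ω, h ω ∂μ := by
  have key : ∀ u : Lp ℝ 1 μ, 0 ≤ u → ∫ ω, (T u) ω ∂μ ≤ ∫ ω, u ω ∂μ := fun u hu => by
    rw [← norm_of_nonneg (hpos u hu), ← norm_of_nonneg hu]
    exact hnorm u
  have le1 := key h h0
  have h0' : 0 ≤ c • one μ - h := sub_nonneg.mpr hc
  have le2 := key _ h0'
  rw [map_sub, _root_.map_smul, hone, int_sub, int_sub, int_smul, int_one] at le2
  linarith

noncomputable def trunc (n : ℕ) (h : Lp ℝ 1 μ) : Lp ℝ 1 μ :=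
  (h ⊓ ((n : ℝ) • one μ)) ⊔ ((-(n : ℝ)) • one μ)

lemma coe_trunc (n : ℕ) (h : Lp ℝ 1 μ) :
    ⇑(trunc n h) =ᵐ[μ] fun ω => max (min (h ω) n) (-(n : ℝ)) := by
  filter_upwards [Lp.coeFn_sup (h ⊓ ((n : ℝ) • one μ)) ((-(n : ℝ)) • one μ),
    Lp.coeFn_inf h ((n : ℝ) • one μ), Lp.coeFn_smul ((n : ℝ)) (one μ),
    Lp.coeFn_smul (-(n : ℝ)) (one μ), coe_one (μ := μ)] with ω h1 h2 h3 h4 h5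
  rw [trunc, h1]
  simp only [Pi.sup_apply, h2, Pi.inf_apply, h3, h4, Pi.smul_apply, h5, smul_eq_mul,
    mul_one]

lemma trunc_tendsto (h : Lp ℝ 1 μ) :
    Tendsto (fun n : ℕ => ‖h - trunc n h‖) atTop (𝓝 0) := by
  have hmeas : Measurable (⇑h) := (Lp.stronglyMeasurable h).measurable
  have heq : ∀ n : ℕ, ‖h - trunc n h‖ =
      ∫ ω, |h ω - max (min (h ω) n) (-(n : ℝ))| ∂μ := by
    intro n
    rw [L1.norm_eq_integral_norm]
    refine integral_congr_ae ?_
    filter_upwards [Lp.coeFn_sub h (trunc n h), coe_trunc n h] with ω h1 h2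
    rw [h1]
    simp only [Pi.sub_apply, h2, Real.norm_eq_abs]
  simp only [heq]
  have h0 : (0 : ℝ) = ∫ ω, (0 : ℝ) ∂μ := by simp
  rw [h0]
  refine tendsto_integral_of_dominated_convergence (fun ω => |h ω|) ?_ ?_ ?_ ?_
  · intro n
    exact ((hmeas.sub ((hmeas.min measurable_const).max measurable_const)).abs).aestronglyMeasurable
  · exact (integrable_coe h).abs
  · intro n
    refine Eventually.of_forall fun ω => ?_
    rw [Real.norm_eq_abs, abs_abs]
    exact real_trunc_abs_le _ _ (Nat.cast_nonneg n)
  · refine Eventually.of_forall fun ω => ?_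
    have : ∀ᶠ n : ℕ in atTop, |h ω - max (min (h ω) n) (-(n : ℝ))| = 0 := by
      filter_upwards [eventually_ge_atTop (Nat.ceil |h ω|)] with n hn
      have hn' : |h ω| ≤ (n : ℝ) := (Nat.ceil_le.mp (le_refl _)).trans (by exact_mod_cast hn)
      have := abs_le.mp hn'
      rw [min_eq_left this.2, max_eq_left this.1]
      simp
    exact Tendsto.congr' (by filter_upwards [this] with n hn; exact hn.symm) tendsto_const_nhds

end T

section T2
variable {T : Lp ℝ 1 μ →ₗ[ℝ] Lp ℝ 1 μ}

lemma int_T (hpos : ∀ f, 0 ≤ f → 0 ≤ T f) (hone : T (one μ) = one μ)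
    (hnorm : ∀ f, ‖T f‖ ≤ ‖f‖) (h : Lp ℝ 1 μ) :
    ∫ ω, (T h) ω ∂μ = ∫ ω, h ω ∂μ := by
  have key : ∀ n : ℕ, ∫ ω, (T (trunc n h)) ω ∂μ = ∫ ω, (trunc n h) ω ∂μ := by
    intro n
    have h0 : 0 ≤ trunc n h + (n : ℝ) • one μ := by
      rw [← Lp.coeFn_nonneg]
      filter_upwards [Lp.coeFn_add (trunc n h) ((n : ℝ) • one μ), coe_trunc n h,
        Lp.coeFn_smul ((n : ℝ)) (one μ), coe_one (μ := μ)] with ω h1 h2 h3 h4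
      rw [h1]
      simp only [Pi.add_apply, h2, h3, Pi.smul_apply, h4, smul_eq_mul, mul_one, Pi.zero_apply]
      have := le_max_right (min (h ω) (n : ℝ)) (-(n : ℝ))
      linarith
    have hb : trunc n h + (n : ℝ) • one μ ≤ ((2 * n : ℝ)) • one μ := by
      rw [← Lp.coeFn_le]
      filter_upwards [Lp.coeFn_add (trunc n h) ((n : ℝ) • one μ), coe_trunc n h,
        Lp.coeFn_smul ((n : ℝ)) (one μ), Lp.coeFn_smul ((2 * n : ℝ)) (one μ),
        coe_one (μ := μ)] with ω h1 h2 h3 h4 h5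
      rw [h1]
      simp only [Pi.add_apply, h2, h3, h4, Pi.smul_apply, h5, smul_eq_mul, mul_one]
      have h6 : min (h ω) (n : ℝ) ≤ (n : ℝ) := min_le_right _ _
      have h7 : max (min (h ω) (n : ℝ)) (-(n : ℝ)) ≤ (n : ℝ) :=
        max_le h6 (by have : (0:ℝ) ≤ n := Nat.cast_nonneg n; linarith)
      linarith
    have := int_T_of_bounded hpos hone hnorm h0 hb
    rw [map_add, _root_.map_smul, hone, int_add, int_add, int_smul, int_one] at this
    linarith
  have hd : ∀ n : ℕ, |∫ ω, (T h) ω ∂μ - ∫ ω, h ω ∂μ| ≤ 2 * ‖h - trunc n h‖ := by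
    intro n
    have e1 : |∫ ω, (T h) ω ∂μ - ∫ ω, (T (trunc n h)) ω ∂μ| ≤ ‖h - trunc n h‖ := by
      rw [← int_sub, ← map_sub]
      exact (abs_int_le _).trans (hnorm _)
    have e2 : |∫ ω, (trunc n h) ω ∂μ - ∫ ω, h ω ∂μ| ≤ ‖h - trunc n h‖ := by
      rw [← int_sub]
      refine (abs_int_le _).trans ?_
      rw [norm_sub_rev]
    have e2' : |∫ ω, (T (trunc n h)) ω ∂μ - ∫ ω, h ω ∂μ| ≤ ‖h - trunc n h‖ := by
      rw [key n]; exact e2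
    have tri := abs_sub_le (∫ ω, (T h) ω ∂μ) (∫ ω, (T (trunc n h)) ω ∂μ) (∫ ω, h ω ∂μ)
    linarith
  have hlim : Tendsto (fun n : ℕ => 2 * ‖h - trunc n h‖) atTop (𝓝 0) := by
    simpa using (trunc_tendsto h).const_mul 2
  have h0 := ge_of_tendsto' hlim hd
  have := abs_nonneg (∫ ω, (T h) ω ∂μ - ∫ ω, h ω ∂μ)
  have : |∫ ω, (T h) ω ∂μ - ∫ ω, h ω ∂μ| = 0 := le_antisymm h0 this
  have := abs_eq_zero.mp this
  linarith

end T2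

section Fix
variable {T : Lp ℝ 1 μ →ₗ[ℝ] Lp ℝ 1 μ}

lemma fix_of_le_int (hpos : ∀ f, 0 ≤ f → 0 ≤ T f) (hone : T (one μ) = one μ)
    (hnorm : ∀ f, ‖T f‖ ≤ ‖f‖) {u : Lp ℝ 1 μ} (hle : T u ≤ u) : T u = u :=
  eq_of_le_of_int hle (int_T hpos hone hnorm u).symm.le

lemma fix_inf (hpos : ∀ f, 0 ≤ f → 0 ≤ T f) (hone : T (one μ) = one μ)
    (hnorm : ∀ f, ‖T f‖ ≤ ‖f‖) {u v : Lp ℝ 1 μ} (hu : T u = u) (hv : T v = v) :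
    T (u ⊓ v) = u ⊓ v := by
  have h1 : T (u ⊓ v) ≤ u := by
    have := T_mono hpos (inf_le_left : u ⊓ v ≤ u); rwa [hu] at this
  have h2 : T (u ⊓ v) ≤ v := by
    have := T_mono hpos (inf_le_right : u ⊓ v ≤ v); rwa [hv] at this
  exact fix_of_le_int hpos hone hnorm (le_inf h1 h2)

lemma fix_sup (hpos : ∀ f, 0 ≤ f → 0 ≤ T f) (hone : T (one μ) = one μ)
    (hnorm : ∀ f, ‖T f‖ ≤ ‖f‖) {u v : Lp ℝ 1 μ} (hu : T u = u) (hv : T v = v) :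
    T (u ⊔ v) = u ⊔ v := by
  have hu' : T (-u) = -u := by rw [map_neg, hu]
  have hv' : T (-v) = -v := by rw [map_neg, hv]
  have := fix_inf hpos hone hnorm hu' hv'
  have heq : u ⊔ v = -((-u) ⊓ (-v)) := by rw [neg_inf, neg_neg, neg_neg]
  rw [heq, map_neg, this]

lemma fix_limit (hnorm : ∀ f, ‖T f‖ ≤ ‖f‖) {u : ℕ → Lp ℝ 1 μ} {v : Lp ℝ 1 μ}
    (hu : ∀ n, T (u n) = u n) (hconv : Tendsto (fun n => ‖v - u n‖) atTop (𝓝 0)) :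
    T v = v := by
  have hd : ∀ n, ‖T v - v‖ ≤ 2 * ‖v - u n‖ := by
    intro n
    have e1 : ‖T v - T (u n)‖ ≤ ‖v - u n‖ := by rw [← map_sub]; exact hnorm _
    have tri : ‖T v - v‖ ≤ ‖T v - T (u n)‖ + ‖T (u n) - v‖ := norm_sub_le_norm_sub_add_norm_sub _ _ _
    have e2 : ‖T (u n) - v‖ = ‖v - u n‖ := by rw [hu n, norm_sub_rev]
    linarith
  have hlim : Tendsto (fun n : ℕ => 2 * ‖v - u n‖) atTop (𝓝 0) := by
    simpa using hconv.const_mul 2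
  have h0 := ge_of_tendsto' hlim hd
  have h1 := norm_nonneg (T v - v)
  have : ‖T v - v‖ = 0 := le_antisymm h0 h1
  have := norm_eq_zero.mp this
  exact sub_eq_zero.mp this

lemma fix_smul (c : ℝ) {u : Lp ℝ 1 μ} (hu : T u = u) : T (c • u) = c • u := by
  rw [_root_.map_smul, hu]

lemma coe_g (n : ℕ) (c : ℝ) (u : Lp ℝ 1 μ) :
    ⇑((((n : ℝ) • (u - c • one μ)) ⊔ 0) ⊓ one μ) =ᵐ[μ]
      fun ω => min (max ((n : ℝ) * (u ω - c)) 0) 1 := by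
  filter_upwards [Lp.coeFn_inf (((n : ℝ) • (u - c • one μ)) ⊔ 0) (one μ),
    Lp.coeFn_sup ((n : ℝ) • (u - c • one μ)) 0,
    Lp.coeFn_smul ((n : ℝ)) (u - c • one μ), Lp.coeFn_sub u (c • one μ),
    Lp.coeFn_smul c (one μ), coe_one (μ := μ), Lp.coeFn_zero ℝ 1 μ]
    with ω h1 h2 h3 h4 h5 h6 h7
  rw [h1]
  simp only [Pi.inf_apply, h2, Pi.sup_apply, h3, Pi.smul_apply, h4, Pi.sub_apply, h5, h6,
    smul_eq_mul, mul_one, h7, Pi.zero_apply]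

lemma fix_chi_level (hpos : ∀ f, 0 ≤ f → 0 ≤ T f) (hone : T (one μ) = one μ)
    (hnorm : ∀ f, ‖T f‖ ≤ ‖f‖) {u : Lp ℝ 1 μ} (hu : T u = u) (c : ℝ)
    (hA : MeasurableSet (⇑u ⁻¹' Set.Ioi c)) :
    T (chi μ (⇑u ⁻¹' Set.Ioi c) hA) = chi μ (⇑u ⁻¹' Set.Ioi c) hA := by
  set g : ℕ → Lp ℝ 1 μ := fun n => (((n : ℝ) • (u - c • one μ)) ⊔ 0) ⊓ one μ with hg
  have hfix : ∀ n, T (g n) = g n := by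
    intro n
    have h1 : T (u - c • one μ) = u - c • one μ := by
      rw [map_sub, _root_.map_smul, hone, hu]
    have h2 := fix_smul (T := T) (n : ℝ) h1
    have h3 : T (0 : Lp ℝ 1 μ) = 0 := map_zero T
    exact fix_inf hpos hone hnorm (fix_sup hpos hone hnorm h2 h3) hone
  refine fix_limit hnorm hfix ?_
  have heq : ∀ n : ℕ, ‖chi μ (⇑u ⁻¹' Set.Ioi c) hA - g n‖ =
      ∫ ω, |(⇑u ⁻¹' Set.Ioi c).indicator (fun _ => (1:ℝ)) ω -
        min (max ((n : ℝ) * (u ω - c)) 0) 1| ∂μ := by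
    intro n
    rw [L1.norm_eq_integral_norm]
    refine integral_congr_ae ?_
    filter_upwards [Lp.coeFn_sub (chi μ (⇑u ⁻¹' Set.Ioi c) hA) (g n),
      coe_chi (μ := μ) hA, coe_g n c u] with ω h1 h2 h3
    rw [h1]
    simp only [Pi.sub_apply, h2, hg, h3, Real.norm_eq_abs]
  simp only [heq]
  have hmeas : Measurable (⇑u) := (Lp.stronglyMeasurable u).measurable
  have H : Tendsto (fun n : ℕ => ∫ ω, |(⇑u ⁻¹' Set.Ioi c).indicator (fun _ => (1:ℝ)) ω -
      min (max ((n : ℝ) * (u ω - c)) 0) 1| ∂μ) atTop (𝓝 (∫ ω, (0 : ℝ) ∂μ)) := by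
    refine tendsto_integral_of_dominated_convergence (fun _ => (1 : ℝ)) ?_ ?_ ?_ ?_
    · intro n
      have m1 : Measurable fun ω => min (max ((n : ℝ) * (u ω - c)) 0) (1:ℝ) :=
        (((hmeas.sub measurable_const).const_mul _).max measurable_const).min measurable_const
      exact (((measurable_one.indicator hA).sub m1).abs).aestronglyMeasurable
    · exact integrable_const 1
    · intro n
      refine Eventually.of_forall fun ω => ?_
      rw [Real.norm_eq_abs, abs_abs]
      have hv1 : (0:ℝ) ≤ min (max ((n : ℝ) * (u ω - c)) 0) 1 :=
        le_min (le_max_right _ _) one_pos.le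
      have hv2 : min (max ((n : ℝ) * (u ω - c)) 0) 1 ≤ 1 := min_le_right _ _
      have hbeta : ((fun _ => (1:ℝ)) ω) = (1:ℝ) := rfl
      by_cases hω : ω ∈ ⇑u ⁻¹' Set.Ioi c
      · rw [Set.indicator_of_mem hω]; rw [abs_le]
        constructor <;> linarith
      · rw [Set.indicator_of_notMem hω]; rw [abs_le]
        constructor <;> linarith
    · refine Eventually.of_forall fun ω => ?_
      by_cases hω : ω ∈ ⇑u ⁻¹' Set.Ioi c
      · have hc : c < u ω := hω
        have hpos' : 0 < u ω - c := by linarith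
        have : ∀ᶠ n : ℕ in atTop, |(⇑u ⁻¹' Set.Ioi c).indicator (fun _ => (1:ℝ)) ω -
            min (max ((n : ℝ) * (u ω - c)) 0) 1| = 0 := by
          filter_upwards [eventually_ge_atTop ⌈(u ω - c)⁻¹⌉₊] with n hn
          have hn' : (u ω - c)⁻¹ ≤ (n : ℝ) := le_trans (Nat.le_ceil _) (by exact_mod_cast hn)
          have hinv : (u ω - c)⁻¹ * (u ω - c) = 1 := inv_mul_cancel₀ (ne_of_gt hpos')
          have h1 : (1:ℝ) ≤ (n : ℝ) * (u ω - c) := by nlinarith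
          rw [max_eq_left (by linarith), min_eq_right h1, Set.indicator_of_mem hω]
          simp
        exact Tendsto.congr' (by filter_upwards [this] with n hn; exact hn.symm) tendsto_const_nhds
      · have hc : u ω ≤ c := not_lt.mp hω
        have : ∀ n : ℕ, |(⇑u ⁻¹' Set.Ioi c).indicator (fun _ => (1:ℝ)) ω -
            min (max ((n : ℝ) * (u ω - c)) 0) 1| = 0 := by
          intro n
          have : (n : ℝ) * (u ω - c) ≤ 0 :=
            mul_nonpos_of_nonneg_of_nonpos (Nat.cast_nonneg n) (by linarith)
          rw [max_eq_right this, min_eq_left one_pos.le, Set.indicator_of_notMem hω]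
          simp
        exact Tendsto.congr (fun n => (this n).symm) tendsto_const_nhds
  rw [integral_zero] at H
  exact H

end Fix

section Fix2
variable {T : Lp ℝ 1 μ →ₗ[ℝ] Lp ℝ 1 μ}

lemma fix_chi_iUnion (hpos : ∀ f, 0 ≤ f → 0 ≤ T f) (hone : T (one μ) = one μ)
    (hnorm : ∀ f, ‖T f‖ ≤ ‖f‖) {A : ℕ → Set Ω} (hA : ∀ n, MeasurableSet (A n))
    (hfix : ∀ n, T (chi μ (A n) (hA n)) = chi μ (A n) (hA n)) :
    T (chi μ (⋃ n, A n) (MeasurableSet.iUnion hA)) =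
      chi μ (⋃ n, A n) (MeasurableSet.iUnion hA) := by
  have hBmeas : ∀ n, MeasurableSet (Set.accumulate A n) :=
    fun n => MeasurableSet.biUnion (Set.to_countable _) (fun i _ => hA i)
  have chi_congr : ∀ (S S' : Set Ω) (hS : MeasurableSet S) (hS' : MeasurableSet S'),
      S = S' → chi μ S hS = chi μ S' hS' := by
    intro S S' hS hS' hSS
    refine Lp.ext ?_
    filter_upwards [coe_chi (μ := μ) hS, coe_chi (μ := μ) hS'] with ω h1 h2
    rw [h1, h2, hSS]
  have hacc0 : Set.accumulate A 0 = A 0 := by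
    ext ω; simp [Set.mem_accumulate, Nat.le_zero]
  have haccS : ∀ n, Set.accumulate A (n + 1) = Set.accumulate A n ∪ A (n + 1) := by
    intro n; ext ω
    simp only [Set.mem_accumulate, Set.mem_union]
    constructor
    · rintro ⟨y, hy, hm⟩
      rcases Nat.le_succ_iff.mp hy with h | h
      · exact Or.inl ⟨y, h, hm⟩
      · subst h; exact Or.inr hm
    · rintro (⟨y, hy, hm⟩ | hm)
      · exact ⟨y, le_trans hy (Nat.le_succ n), hm⟩
      · exact ⟨n + 1, le_refl _, hm⟩
  have hBfix : ∀ n, T (chi μ (Set.accumulate A n) (hBmeas n)) =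
      chi μ (Set.accumulate A n) (hBmeas n) := by
    intro n
    induction n with
    | zero =>
        rw [chi_congr _ _ (hBmeas 0) (hA 0) hacc0]
        exact hfix 0
    | succ n ih =>
        rw [chi_congr _ _ (hBmeas (n + 1)) ((hBmeas n).union (hA (n + 1))) (haccS n),
          chi_union (hBmeas n) (hA (n + 1))]
        exact fix_sup hpos hone hnorm ih (hfix (n + 1))
  refine fix_limit hnorm hBfix ?_
  have heq : ∀ n : ℕ, ‖chi μ (⋃ i, A i) (MeasurableSet.iUnion hA) -
      chi μ (Set.accumulate A n) (hBmeas n)‖ =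
      ∫ ω, |(⋃ i, A i).indicator (fun _ => (1:ℝ)) ω -
        (Set.accumulate A n).indicator (fun _ => (1:ℝ)) ω| ∂μ := by
    intro n
    rw [L1.norm_eq_integral_norm]
    refine integral_congr_ae ?_
    filter_upwards [Lp.coeFn_sub (chi μ (⋃ i, A i) (MeasurableSet.iUnion hA))
      (chi μ (Set.accumulate A n) (hBmeas n)),
      coe_chi (μ := μ) (MeasurableSet.iUnion hA), coe_chi (μ := μ) (hBmeas n)] with ω h1 h2 h3
    rw [h1]
    simp only [Pi.sub_apply, h2, h3, Real.norm_eq_abs]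
  simp only [heq]
  have H : Tendsto (fun n : ℕ => ∫ ω, |(⋃ i, A i).indicator (fun _ => (1:ℝ)) ω -
      (Set.accumulate A n).indicator (fun _ => (1:ℝ)) ω| ∂μ) atTop (𝓝 (∫ ω, (0:ℝ) ∂μ)) := by
    refine tendsto_integral_of_dominated_convergence (fun _ => (1 : ℝ)) ?_ ?_ ?_ ?_
    · intro n
      exact (((measurable_one.indicator (MeasurableSet.iUnion hA)).sub
        (measurable_one.indicator (hBmeas n))).abs).aestronglyMeasurable
    · exact integrable_const 1
    · intro n
      refine Eventually.of_forall fun ω => ?_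
      rw [Real.norm_eq_abs, abs_abs]
      have hbeta : ((fun _ => (1:ℝ)) ω) = (1:ℝ) := rfl
      by_cases h1 : ω ∈ ⋃ i, A i <;> by_cases h2 : ω ∈ Set.accumulate A n
      · rw [Set.indicator_of_mem h1, Set.indicator_of_mem h2]; norm_num
      · rw [Set.indicator_of_mem h1, Set.indicator_of_notMem h2]; norm_num
      · rw [Set.indicator_of_notMem h1, Set.indicator_of_mem h2]; norm_num
      · rw [Set.indicator_of_notMem h1, Set.indicator_of_notMem h2]; norm_num
    · refine Eventually.of_forall fun ω => ?_
      by_cases h1 : ω ∈ ⋃ i, A i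
      · obtain ⟨i, hi⟩ := Set.mem_iUnion.mp h1
        have : ∀ᶠ n : ℕ in atTop, |(⋃ i, A i).indicator (fun _ => (1:ℝ)) ω -
            (Set.accumulate A n).indicator (fun _ => (1:ℝ)) ω| = 0 := by
          filter_upwards [eventually_ge_atTop i] with n hn
          have hmem : ω ∈ Set.accumulate A n := Set.mem_accumulate.mpr ⟨i, hn, hi⟩
          rw [Set.indicator_of_mem h1, Set.indicator_of_mem hmem]
          simp
        exact Tendsto.congr' (by filter_upwards [this] with n hn; exact hn.symm)
          tendsto_const_nhds
      · have : ∀ n : ℕ, |(⋃ i, A i).indicator (fun _ => (1:ℝ)) ω -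
            (Set.accumulate A n).indicator (fun _ => (1:ℝ)) ω| = 0 := by
          intro n
          have hnm : ω ∉ Set.accumulate A n := by
            intro hc
            exact h1 (Set.mem_iUnion.mpr (by
              obtain ⟨i, _, hi⟩ := Set.mem_accumulate.mp hc
              exact ⟨i, hi⟩))
          rw [Set.indicator_of_notMem h1, Set.indicator_of_notMem hnm]
          simp
        exact Tendsto.congr (fun n => (this n).symm) tendsto_const_nhds
  rw [integral_zero] at H
  exact H

end Fix2

lemma sint_add (A : Set Ω) (u v : Lp ℝ 1 μ) :
    ∫ ω in A, (u + v) ω ∂μ = ∫ ω in A, u ω ∂μ + ∫ ω in A, v ω ∂μ := by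
  rw [integral_congr_ae (ae_restrict_of_ae (Lp.coeFn_add u v))]
  exact integral_add (integrable_coe u).integrableOn (integrable_coe v).integrableOn

lemma sint_sub (A : Set Ω) (u v : Lp ℝ 1 μ) :
    ∫ ω in A, (u - v) ω ∂μ = ∫ ω in A, u ω ∂μ - ∫ ω in A, v ω ∂μ := by
  rw [integral_congr_ae (ae_restrict_of_ae (Lp.coeFn_sub u v))]
  simpa using integral_sub (integrable_coe u).integrableOn (integrable_coe v).integrableOn

lemma sint_smul (A : Set Ω) (c : ℝ) (u : Lp ℝ 1 μ) :
    ∫ ω in A, (c • u) ω ∂μ = c * ∫ ω in A, u ω ∂μ := by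
  rw [integral_congr_ae (ae_restrict_of_ae (Lp.coeFn_smul c u))]
  simp only [Pi.smul_apply]
  rw [integral_smul, smul_eq_mul]

section T3
variable {T : Lp ℝ 1 μ →ₗ[ℝ] Lp ℝ 1 μ}

lemma setIntegral_T (hpos : ∀ f, 0 ≤ f → 0 ≤ T f) (hone : T (one μ) = one μ)
    (hnorm : ∀ f, ‖T f‖ ≤ ‖f‖) {A : Set Ω} (hA : MeasurableSet A)
    (hfixA : T (chi μ A hA) = chi μ A hA) (h : Lp ℝ 1 μ) :
    ∫ ω in A, (T h) ω ∂μ = ∫ ω in A, h ω ∂μ := by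
  have bdd : ∀ (g : Lp ℝ 1 μ) (c : ℝ), 0 ≤ g → g ≤ c • one μ →
      ∫ ω in A, (T g) ω ∂μ = ∫ ω in A, g ω ∂μ := by
    intro g c hg0 hgc
    have hfixAc : T (chi μ Aᶜ hA.compl) = chi μ Aᶜ hA.compl := by
      rw [chi_compl hA, map_sub, hone, hfixA]
    have vanish : ∀ (S : Set Ω) (hS : MeasurableSet S), T (chi μ S hS) = chi μ S hS →
        ∀ w : Lp ℝ 1 μ, 0 ≤ w → w ≤ c • chi μ S hS → ∫ ω in Sᶜ, (T w) ω ∂μ = 0 := by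
      intro S hS hfixS w hw0 hwc
      have h1 : 0 ≤ T w := hpos w hw0
      have h2 : T w ≤ c • chi μ S hS := by
        have := T_mono hpos hwc; rwa [_root_.map_smul, hfixS] at this
      rw [← Lp.coeFn_nonneg] at h1
      rw [← Lp.coeFn_le] at h2
      have hz : ∀ᵐ ω ∂μ, ω ∈ Sᶜ → (T w) ω = 0 := by
        filter_upwards [h1, h2, Lp.coeFn_smul c (chi μ S hS), coe_chi (μ := μ) hS]
          with ω e1 e2 e3 e4 hmem
        simp only [Pi.zero_apply] at e1
        rw [e3] at e2
        simp only [Pi.smul_apply, e4, smul_eq_mul] at e2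
        rw [Set.indicator_of_notMem hmem] at e2
        rw [mul_zero] at e2
        linarith
      calc ∫ ω in Sᶜ, (T w) ω ∂μ = ∫ _ in Sᶜ, (0:ℝ) ∂μ :=
            integral_congr_ae ((ae_restrict_iff' hS.compl).mpr hz)
        _ = 0 := by simp
    set u := restr A hA g with hu
    set v := restr Aᶜ hA.compl g with hv
    have huv : u + v = g := restr_add_compl hA g
    have hu0 : 0 ≤ u := restr_nonneg hA hg0
    have hv0 : 0 ≤ v := restr_nonneg hA.compl hg0
    have huc : u ≤ c • chi μ A hA := restr_le_smul_chi hA hgc hg0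
    have hvc : v ≤ c • chi μ Aᶜ hA.compl := restr_le_smul_chi hA.compl hgc hg0
    have hTv0 : ∫ ω in (Aᶜ)ᶜ, (T v) ω ∂μ = 0 := vanish Aᶜ hA.compl hfixAc v hv0 hvc
    rw [compl_compl] at hTv0
    have hTu : ∫ ω in A, (T u) ω ∂μ = ∫ ω, (T u) ω ∂μ := by
      have h0 := vanish A hA hfixA u hu0 huc
      rw [← integral_add_compl hA (integrable_coe (T u)), h0, add_zero]
    have hsplit : ∫ ω in A, (T g) ω ∂μ = ∫ ω in A, (T u) ω ∂μ + ∫ ω in A, (T v) ω ∂μ := by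
      conv_lhs => rw [← huv, map_add]
      exact sint_add A _ _
    rw [hsplit, hTv0, add_zero, hTu, int_T hpos hone hnorm u, hu, int_restr hA g]
  have key : ∀ n : ℕ, ∫ ω in A, (T (trunc n h)) ω ∂μ = ∫ ω in A, (trunc n h) ω ∂μ := by
    intro n
    have h0 : 0 ≤ trunc n h + (n : ℝ) • one μ := by
      rw [← Lp.coeFn_nonneg]
      filter_upwards [Lp.coeFn_add (trunc n h) ((n : ℝ) • one μ), coe_trunc n h,
        Lp.coeFn_smul ((n : ℝ)) (one μ), coe_one (μ := μ)] with ω h1 h2 h3 h4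
      rw [h1]
      simp only [Pi.add_apply, h2, h3, Pi.smul_apply, h4, smul_eq_mul, mul_one, Pi.zero_apply]
      have := le_max_right (min (h ω) (n : ℝ)) (-(n : ℝ))
      linarith
    have hb : trunc n h + (n : ℝ) • one μ ≤ ((2 * n : ℝ)) • one μ := by
      rw [← Lp.coeFn_le]
      filter_upwards [Lp.coeFn_add (trunc n h) ((n : ℝ) • one μ), coe_trunc n h,
        Lp.coeFn_smul ((n : ℝ)) (one μ), Lp.coeFn_smul ((2 * n : ℝ)) (one μ),
        coe_one (μ := μ)] with ω h1 h2 h3 h4 h5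
      rw [h1]
      simp only [Pi.add_apply, h2, h3, h4, Pi.smul_apply, h5, smul_eq_mul, mul_one]
      have h6 : min (h ω) (n : ℝ) ≤ (n : ℝ) := min_le_right _ _
      have h7 : max (min (h ω) (n : ℝ)) (-(n : ℝ)) ≤ (n : ℝ) :=
        max_le h6 (by have : (0:ℝ) ≤ n := Nat.cast_nonneg n; linarith)
      linarith
    have := bdd _ (2 * n) h0 hb
    rw [map_add, _root_.map_smul, hone, sint_add, sint_add, sint_smul] at this
    linarith
  have hd : ∀ n : ℕ, |∫ ω in A, (T h) ω ∂μ - ∫ ω in A, h ω ∂μ| ≤ 2 * ‖h - trunc n h‖ := by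
    intro n
    have e1 : |∫ ω in A, (T h) ω ∂μ - ∫ ω in A, (T (trunc n h)) ω ∂μ| ≤ ‖h - trunc n h‖ := by
      rw [← sint_sub A (T h) (T (trunc n h)), ← map_sub]
      exact (abs_setIntegral_le _ _).trans (hnorm _)
    have e2 : |∫ ω in A, (trunc n h) ω ∂μ - ∫ ω in A, h ω ∂μ| ≤ ‖h - trunc n h‖ := by
      rw [← sint_sub A (trunc n h) h]
      refine (abs_setIntegral_le _ _).trans ?_
      rw [norm_sub_rev]
    have e2' : |∫ ω in A, (T (trunc n h)) ω ∂μ - ∫ ω in A, h ω ∂μ| ≤ ‖h - trunc n h‖ := by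
      rw [key n]; exact e2
    have tri := abs_sub_le (∫ ω in A, (T h) ω ∂μ) (∫ ω in A, (T (trunc n h)) ω ∂μ)
      (∫ ω in A, h ω ∂μ)
    linarith
  have hlim : Tendsto (fun n : ℕ => 2 * ‖h - trunc n h‖) atTop (𝓝 0) := by
    simpa using (trunc_tendsto h).const_mul 2
  have h0 := ge_of_tendsto' hlim hd
  have h1 := abs_nonneg (∫ ω in A, (T h) ω ∂μ - ∫ ω in A, h ω ∂μ)
  have h2 := abs_eq_zero.mp (le_antisymm h0 h1)
  linarith

end T3

section G
variable (T : Lp ℝ 1 μ →ₗ[ℝ] Lp ℝ 1 μ)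

def douglasG (hpos : ∀ f, 0 ≤ f → 0 ≤ T f) (hone : T (one μ) = one μ)
    (hnorm : ∀ f, ‖T f‖ ≤ ‖f‖) : MeasurableSpace Ω where
  MeasurableSet' A := ∃ hA : MeasurableSet A, T (chi μ A hA) = chi μ A hA
  measurableSet_empty := ⟨MeasurableSet.empty, by rw [chi_empty]; exact map_zero T⟩
  measurableSet_compl := by
    rintro A ⟨hA, hfix⟩
    exact ⟨hA.compl, by rw [chi_compl hA, map_sub, hone, hfix]⟩
  measurableSet_iUnion := by
    intro A hAs
    choose hA hfix using hAs
    exact ⟨MeasurableSet.iUnion hA, fix_chi_iUnion hpos hone hnorm hA hfix⟩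

end G

end Douglas

/-- Douglas' theorem: a linear operator on `L¹` of a probability space is a contractive Markov
projection iff it is an ordinary conditional expectation operator. -/
theorem douglas_characterization_of_condExp
    {Ω : Type*} [mΩ : MeasurableSpace Ω] (μ : Measure Ω) [IsProbabilityMeasure μ]
    (T : Lp ℝ 1 μ →ₗ[ℝ] Lp ℝ 1 μ) :
    ((∀ f, T (T f) = T f) ∧ (∀ f, 0 ≤ f → 0 ≤ T f) ∧
      T ((memLp_const (1 : ℝ)).toLp fun _ => (1 : ℝ)) =
        ((memLp_const (1 : ℝ)).toLp fun _ => (1 : ℝ)) ∧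
      (∀ f, ‖T f‖ ≤ ‖f‖)) ↔
    ∃ G : MeasurableSpace Ω, G ≤ mΩ ∧ ∀ f : Lp ℝ 1 μ, ⇑(T f) =ᵐ[μ] μ[(f : Ω → ℝ)|G] := by
  constructor
  · rintro ⟨hproj, hpos, hone', hnorm⟩
    have hone : T (Douglas.one μ) = Douglas.one μ := hone'
    have hG : Douglas.douglasG T hpos hone hnorm ≤ mΩ := fun s hs => hs.1
    refine ⟨Douglas.douglasG T hpos hone hnorm, hG, fun f => ?_⟩
    haveI : IsFiniteMeasure (μ.trim hG) := isFiniteMeasure_trim hG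
    haveI : SigmaFinite (μ.trim hG) := inferInstance
    have hmeasG : Measurable[Douglas.douglasG T hpos hone hnorm] (⇑(T f)) := by
      refine measurable_of_Ioi fun c => ?_
      exact ⟨(Lp.stronglyMeasurable (T f)).measurable measurableSet_Ioi,
        Douglas.fix_chi_level hpos hone hnorm (hproj f) c _⟩
    refine ae_eq_condExp_of_forall_setIntegral_eq hG (Douglas.integrable_coe f)
      (fun s _ _ => (Douglas.integrable_coe (T f)).integrableOn)
      (fun s hs _ => ?_) ⟨⇑(T f), hmeasG.stronglyMeasurable, EventuallyEq.rfl⟩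
    obtain ⟨hs1, hfix⟩ := hs
    exact Douglas.setIntegral_T hpos hone hnorm hs1 hfix f
  · rintro ⟨G, hG, hae⟩
    haveI : IsFiniteMeasure (μ.trim hG) := isFiniteMeasure_trim hG
    haveI : SigmaFinite (μ.trim hG) := inferInstance
    refine ⟨?_, ?_, ?_, ?_⟩
    · intro f
      refine Lp.ext ?_
      have h1 := hae (T f)
      have h2 : μ[⇑(T f)|G] =ᵐ[μ] μ[μ[⇑f|G]|G] := condExp_congr_ae (hae f)
      have h3 : μ[μ[⇑f|G]|G] =ᵐ[μ] μ[⇑f|G] := condExp_condExp_of_le le_rfl hG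
      have h4 := (hae f).symm
      exact ((h1.trans h2).trans h3).trans h4
    · intro f hf
      rw [← Lp.coeFn_nonneg] at hf ⊢
      have h1 := condExp_nonneg (m := G) hf
      filter_upwards [hae f, h1] with ω e1 e2
      rw [Pi.zero_apply] at e2 ⊢
      rw [e1]; exact e2
    · refine Lp.ext ?_
      have h1 := hae ((memLp_const (1 : ℝ)).toLp fun _ => (1 : ℝ))
      have h2 : μ[⇑((memLp_const (1 : ℝ)).toLp fun _ => (1 : ℝ) : Lp ℝ 1 μ)|G] =ᵐ[μ]
          μ[(fun _ => (1:ℝ))|G] := condExp_congr_ae (MemLp.coeFn_toLp _)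
      have h3 : μ[(fun _ => (1:ℝ))|G] = fun _ => (1:ℝ) := condExp_const hG 1
      have h4 : ⇑((memLp_const (1 : ℝ)).toLp fun _ => (1 : ℝ) : Lp ℝ 1 μ) =ᵐ[μ]
          fun _ => (1:ℝ) := MemLp.coeFn_toLp _
      filter_upwards [h1, h2, h4] with ω e1 e2 e4
      rw [e1, e2, h3, e4]
    · intro f
      have e : eLpNorm ⇑(T f) 1 μ ≤ eLpNorm ⇑f 1 μ := by
        rw [eLpNorm_congr_ae (hae f)]
        exact eLpNorm_one_condExp_le_eLpNorm _
      rw [Lp.norm_def, Lp.norm_def]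
      exact ENNReal.toReal_mono (Lp.eLpNorm_ne_top f) e
end
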